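/- arXiv:2404.04368 — 7 statements merged into one kernel-verified Lean document; each statement's English description precedes it below -/
import Mathlib

section
/- Let R be a nontrivial commutative ring and let d, n ≥ 1 with D = d + n. For every primitive d-lattice Λ in R^D there exists g ∈ SL_D(R) such that g(R^d × {0}) = Λ, where R^d × {0} denotes the R-submodule of R^D generated by the first d standard basis vectors. In particular, SL_D(R) acts transitively on the set of primitive d-lattices in R^D. -/
/-- The `R`-submodule `R^d × {0}` of `R^(d+n)` generated by the first `d`
standard basis vectors, i.e. the vectors whose last `n` coordinates vanish. -/
def stdLattice (R : Type*) [CommRing R] (d n : ℕ) : Submodule R (Fin (d + n) → R) where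
  carrier := {x | ∀ i : Fin (d + n), d ≤ (i : ℕ) → x i = 0}
  add_mem' := fun ha hb i hi => by simp [ha i hi, hb i hi]
  zero_mem' := fun i _ => rfl
  smul_mem' := fun c x hx i hi => by simp [hx i hi]

/-- A submodule `Λ` of `R^(d+n)` is a primitive `d`-lattice if it is a free
`R`-module of rank `d` and the quotient module is a free `R`-module of rank `n`. -/
def IsPrimitiveLattice (R : Type*) [CommRing R] (d n : ℕ)
    (Λ : Submodule R (Fin (d + n) → R)) : Prop :=
  Module.Free R Λ ∧ Module.rank R Λ = d ∧
    Module.Free R ((Fin (d + n) → R) ⧸ Λ) ∧ Module.rank R ((Fin (d + n) → R) ⧸ Λ) = n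

/-- The standard lattice is the span of the first `d` standard basis vectors. -/
theorem stdLattice_eq_span (R : Type*) [CommRing R] (d n : ℕ) :
    stdLattice R d n =
      Submodule.span R (Set.range fun i : Fin d => Pi.single (Fin.castAdd n i) (1 : R)) := by
  apply le_antisymm
  · intro x hx
    have hx' : ∀ i : Fin (d + n), d ≤ (i : ℕ) → x i = 0 := hx
    have hxsum : x = ∑ i : Fin d, x (Fin.castAdd n i) • (Pi.single (Fin.castAdd n i) (1 : R) : Fin (d + n) → R) := by
      have h1 : ∑ i : Fin (d + n), Pi.single i (x i) = x := Finset.univ_sum_single x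
      rw [Fin.sum_univ_add] at h1
      have h2 : ∀ i : Fin n, (Pi.single (Fin.natAdd d i) (x (Fin.natAdd d i)) : Fin (d + n) → R) = 0 := by
        intro i
        rw [hx' (Fin.natAdd d i) (by simp [Fin.natAdd]), Pi.single_zero]
      rw [Finset.sum_congr rfl (fun i _ => h2 i), Finset.sum_const, smul_zero, add_zero] at h1
      have h4 : ∀ i : Fin d, x (Fin.castAdd n i) •
          (Pi.single (Fin.castAdd n i) (1 : R) : Fin (d + n) → R) =
          Pi.single (Fin.castAdd n i) (x (Fin.castAdd n i)) := fun i => by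
        rw [← Pi.single_smul, smul_eq_mul, mul_one]
      conv_lhs => rw [← h1]
      exact Finset.sum_congr rfl fun i _ => (h4 i).symm
    rw [hxsum]
    exact Submodule.sum_mem _ fun i _ =>
      Submodule.smul_mem _ _ (Submodule.subset_span ⟨i, rfl⟩)
  · rw [Submodule.span_le]
    rintro _ ⟨i, rfl⟩
    intro j hj
    have hne : j ≠ Fin.castAdd n i := by
      intro h
      rw [h] at hj
      simp only [Fin.coe_castAdd] at hj
      omega
    exact Pi.single_eq_of_ne hne 1

/-- `SL_D(R)` acts transitively on the set of primitive `d`-lattices in `R^D`,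
`D = d + n`: every primitive `d`-lattice is the image of `R^d × {0}` by some
`g ∈ SL_D(R)`. -/
theorem sl_transitive_on_primitive_lattices
    (R : Type*) [CommRing R] [Nontrivial R] (d n : ℕ) (hd : 1 ≤ d) (hn : 1 ≤ n)
    (Λ : Submodule R (Fin (d + n) → R)) (hΛ : IsPrimitiveLattice R d n Λ) :
    ∃ g : Matrix.SpecialLinearGroup (Fin (d + n)) R,
      Submodule.map
        (Matrix.mulVecLin (g : Matrix (Fin (d + n)) (Fin (d + n)) R))
        (stdLattice R d n) = Λ := by
  classical
  obtain ⟨hF, hrk, hFQ, hrkQ⟩ := hΛ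
  haveI : Module.Finite R Λ := Module.finite_of_rank_eq_nat hrk
  haveI : Module.Finite R ((Fin (d + n) → R) ⧸ Λ) := Module.finite_of_rank_eq_nat hrkQ
  let bΛ : Module.Basis (Fin d) R Λ :=
    Module.finBasisOfFinrankEq R Λ (Module.finrank_eq_of_rank_eq hrk)
  let bQ : Module.Basis (Fin n) R ((Fin (d + n) → R) ⧸ Λ) :=
    Module.finBasisOfFinrankEq R _ (Module.finrank_eq_of_rank_eq hrkQ)
  -- splitting of the quotient map
  obtain ⟨s, hs⟩ := Module.projective_lifting_property Λ.mkQ LinearMap.id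
    (Submodule.mkQ_surjective Λ)
  have hs' : ∀ q, Λ.mkQ (s q) = q := fun q => LinearMap.congr_fun hs q
  -- the equivalence Λ × Q ≃ R^(d+n)
  let φ : Λ × ((Fin (d + n) → R) ⧸ Λ) →ₗ[R] (Fin (d + n) → R) := Λ.subtype.coprod s
  have hφ : ∀ x q, φ (x, q) = (x : Fin (d + n) → R) + s q := fun x q => rfl
  have hφbij : Function.Bijective φ := by
    constructor
    · rintro ⟨x, q⟩ ⟨y, p⟩ h
      rw [hφ, hφ] at h
      have hq : q = p := by
        have h3 := congrArg Λ.mkQ h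
        rwa [map_add, map_add, hs', hs', Submodule.mkQ_apply, Submodule.mkQ_apply,
          (Submodule.Quotient.mk_eq_zero Λ).2 x.2, (Submodule.Quotient.mk_eq_zero Λ).2 y.2,
          zero_add, zero_add] at h3
      subst hq
      have hx : (x : Fin (d + n) → R) = y := by
        have := add_right_cancel h
        exact this
      exact Prod.ext (Subtype.ext hx) rfl
    · intro v
      have hmem : v - s (Λ.mkQ v) ∈ Λ := by
        rw [← Submodule.Quotient.mk_eq_zero Λ, ← Submodule.mkQ_apply, map_sub, hs', sub_self]
      exact ⟨(⟨v - s (Λ.mkQ v), hmem⟩, Λ.mkQ v), by rw [hφ]; simp⟩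
  let e : (Λ × ((Fin (d + n) → R) ⧸ Λ)) ≃ₗ[R] (Fin (d + n) → R) :=
    LinearEquiv.ofBijective φ hφbij
  have he : ∀ x, e x = φ x := fun x => rfl
  -- the basis of R^(d+n) adapted to Λ
  let B : Module.Basis (Fin d ⊕ Fin n) R (Fin (d + n) → R) := (bΛ.prod bQ).map e
  let B' : Module.Basis (Fin (d + n)) R (Fin (d + n) → R) := B.reindex finSumFinEquiv
  have hB' : ∀ i : Fin d, B' (Fin.castAdd n i) = (bΛ i : Fin (d + n) → R) := by
    intro i
    have h1 : B' (Fin.castAdd n i) = B (finSumFinEquiv.symm (Fin.castAdd n i)) :=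
      Module.Basis.reindex_apply _ _ _
    rw [h1, finSumFinEquiv_symm_apply_castAdd]
    show e ((bΛ.prod bQ) (Sum.inl i)) = _
    have h2 : (bΛ.prod bQ) (Sum.inl i) = (bΛ i, 0) := by
      simp [Module.Basis.prod_apply]
    rw [h2, he, hφ]
    simp
  -- the linear automorphism sending the standard basis to B'
  let f : (Fin (d + n) → R) ≃ₗ[R] (Fin (d + n) → R) :=
    (Pi.basisFun R (Fin (d + n))).equiv B' (Equiv.refl _)
  have hf : ∀ i : Fin (d + n), f (Pi.single i 1) = B' i := by
    intro i
    rw [← Pi.basisFun_apply]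
    simpa using Module.Basis.equiv_apply (Pi.basisFun R (Fin (d + n))) i B' (Equiv.refl _)
  -- the matrix of f
  let M : Matrix (Fin (d + n)) (Fin (d + n)) R := LinearMap.toMatrix' (f : _ →ₗ[R] _)
  have hM : M.mulVecLin = (f : (Fin (d + n) → R) →ₗ[R] (Fin (d + n) → R)) :=
    Matrix.toLin'_toMatrix' _
  have hMdet : IsUnit M.det := by
    rw [LinearMap.det_toMatrix']
    exact f.isUnit_det'
  obtain ⟨u, hu⟩ := hMdet
  -- fix the determinant using a diagonal matrix
  let i₀ : Fin (d + n) := ⟨d, by omega⟩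
  let v : Fin (d + n) → R := Function.update (fun _ => (1 : R)) i₀ ((u⁻¹ : Rˣ) : R)
  let w : Fin (d + n) → R := Function.update (fun _ => (1 : R)) i₀ ((u : Rˣ) : R)
  have hvw : ∀ j, v j * w j = 1 := by
    intro j
    by_cases h : j = i₀
    · subst h
      simp [v, w]
    · simp [v, w, Function.update_of_ne h]
  have hvprod : ∏ j, v j = ((u⁻¹ : Rˣ) : R) := by
    rw [show (((u⁻¹ : Rˣ) : R)) = v i₀ by simp [v]]
    exact Finset.prod_eq_single i₀ (fun j _ hj => Function.update_of_ne hj _ _)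
      (fun h => absurd (Finset.mem_univ i₀) h)
  let N : Matrix (Fin (d + n)) (Fin (d + n)) R := M * Matrix.diagonal v
  have hNdet : N.det = 1 := by
    rw [Matrix.det_mul, Matrix.det_diagonal, hvprod, ← hu, Units.mul_inv]
  refine ⟨⟨N, hNdet⟩, ?_⟩
  -- the diagonal matrix preserves the standard lattice
  have hdiag : Submodule.map (Matrix.diagonal v).mulVecLin (stdLattice R d n) =
      stdLattice R d n := by
    apply le_antisymm
    · rintro _ ⟨x, hx, rfl⟩
      intro j hj
      show (Matrix.diagonal v).mulVec x j = 0
      rw [Matrix.mulVec_diagonal, hx j hj, mul_zero]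
    · intro x hx
      refine ⟨fun j => w j * x j, ?_, ?_⟩
      · intro j hj
        show w j * x j = 0
        rw [hx j hj, mul_zero]
      · show (Matrix.diagonal v).mulVec _ = x
        funext j
        rw [Matrix.mulVec_diagonal, ← mul_assoc, hvw j, one_mul]
  -- f maps the standard lattice onto Λ
  have hmap : Submodule.map (f : (Fin (d + n) → R) →ₗ[R] _) (stdLattice R d n) = Λ := by
    rw [stdLattice_eq_span, Submodule.map_span, ← Set.range_comp]
    have hrange : ((f : (Fin (d + n) → R) →ₗ[R] _) ∘
        fun i : Fin d => Pi.single (Fin.castAdd n i) (1 : R)) =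
        (Λ.subtype ∘ bΛ) := by
      funext i
      show f (Pi.single (Fin.castAdd n i) 1) = _
      rw [hf, hB']
      rfl
    rw [hrange, Set.range_comp, ← Submodule.map_span, Module.Basis.span_eq, Submodule.map_top,
      Submodule.range_subtype]
  -- conclusion
  show Submodule.map (Matrix.mulVecLin N) (stdLattice R d n) = Λ
  rw [show N.mulVecLin = M.mulVecLin.comp (Matrix.diagonal v).mulVecLin from
    Matrix.mulVecLin_mul _ _, Submodule.map_comp, hdiag, hM, hmap]
end

section
/- Let R be a nontrivial commutative ring, I an ideal of R, and d, n ≥ 1 with D = d + n. For every primitive d-lattice Λ in R^D with Λ ⊆ R^d × I^n, there exists g in the Hecke congruence subgroup Γ_I such that g(R^d × {0}) = Λ. In particular, Γ_I acts transitively on the set of primitive d-lattices in R^D that are contained in R^d × I^n. -/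
/-- A free module of rank `d` over a nontrivial commutative ring has a basis indexed by `Fin d`. -/
lemma exists_fin_basis_of_rank_eq (R M : Type*) [CommRing R] [Nontrivial R] [AddCommGroup M]
    [Module R M] [Module.Free R M] (d : ℕ) (h : Module.rank R M = d) :
    Nonempty (Module.Basis (Fin d) R M) := by
  let b := Module.Free.chooseBasis R M
  have hmk : Cardinal.mk (Module.Free.ChooseBasisIndex R M) = (d : Cardinal) := by
    rw [b.mk_eq_rank'', h]
  haveI : Finite (Module.Free.ChooseBasisIndex R M) :=
    Cardinal.lt_aleph0_iff_finite.mp (hmk ▸ Cardinal.nat_lt_aleph0 d)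
  haveI := Fintype.ofFinite (Module.Free.ChooseBasisIndex R M)
  have hcard : Fintype.card (Module.Free.ChooseBasisIndex R M) = d := by
    have := hmk
    rw [Cardinal.mk_fintype] at this
    exact_mod_cast this
  exact ⟨b.reindex (Fintype.equivFinOfCardEq hcard)⟩

/-- Splitting of the quotient map gives an equivalence `Λ × (R^D/Λ) ≃ R^D`. -/
noncomputable def splitEquiv' {R : Type*} [CommRing R] {D : ℕ} (Λ : Submodule R (Fin D → R))
    (s : ((Fin D → R) ⧸ Λ) →ₗ[R] (Fin D → R))
    (hs : Λ.mkQ ∘ₗ s = LinearMap.id) :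
    (Λ × ((Fin D → R) ⧸ Λ)) ≃ₗ[R] (Fin D → R) := by
  have hs' : ∀ q : (Fin D → R) ⧸ Λ, (Submodule.Quotient.mk (s q) : (Fin D → R) ⧸ Λ) = q :=
    fun q => by
      have := congrFun (congrArg DFunLike.coe hs) q
      simpa using this
  have hmem : ∀ x : Fin D → R, x - s (Λ.mkQ x) ∈ Λ := fun x => by
    rw [← Submodule.Quotient.mk_eq_zero]
    simp [Submodule.Quotient.mk_sub, hs']
  refine LinearEquiv.ofLinear (Λ.subtype.coprod s)
    (LinearMap.prod
      (LinearMap.codRestrict Λ (LinearMap.id - s ∘ₗ Λ.mkQ) hmem)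
      Λ.mkQ) ?_ ?_
  · refine LinearMap.ext fun x => ?_
    simp
  · refine LinearMap.ext fun p => ?_
    obtain ⟨a, q⟩ := p
    have ha : (Submodule.Quotient.mk (a : Fin D → R) : (Fin D → R) ⧸ Λ) = 0 :=
      (Submodule.Quotient.mk_eq_zero Λ).mpr a.2
    refine Prod.ext (Subtype.ext ?_) ?_
    · simp [hs', map_add, Submodule.Quotient.mk_add, ha]
    · simp [hs', map_add, Submodule.Quotient.mk_add, ha]

theorem splitEquiv'_apply {R : Type*} [CommRing R] {D : ℕ} (Λ : Submodule R (Fin D → R))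
    (s : ((Fin D → R) ⧸ Λ) →ₗ[R] (Fin D → R))
    (hs : Λ.mkQ ∘ₗ s = LinearMap.id) (a : Λ) (q : (Fin D → R) ⧸ Λ) :
    splitEquiv' Λ s hs (a, q) = (a : Fin D → R) + s q := rfl



/-- The `R`-submodule `R^d × I^n` of `R^(d+n)`: vectors whose last `n` coordinates
lie in the ideal `I`. -/
def stdLatticeMod (R : Type*) [CommRing R] (I : Ideal R) (d n : ℕ) :
    Submodule R (Fin (d + n) → R) where
  carrier := {x | ∀ i : Fin (d + n), d ≤ (i : ℕ) → x i ∈ I}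
  add_mem' := fun ha hb i hi => I.add_mem (ha i hi) (hb i hi)
  zero_mem' := fun i _ => I.zero_mem
  smul_mem' := fun c x hx i hi => by simpa using I.mul_mem_left c (hx i hi)

/-- Membership in the Hecke congruence subgroup by blocks `Γ_I`: the entries of the
lower left `n × d` block all lie in the ideal `I`. -/
def MemHecke {R : Type*} [CommRing R] (I : Ideal R) (d n : ℕ)
    (g : Matrix.SpecialLinearGroup (Fin (d + n)) R) : Prop :=
  ∀ i j : Fin (d + n), d ≤ (i : ℕ) → (j : ℕ) < d →
    (g : Matrix (Fin (d + n)) (Fin (d + n)) R) i j ∈ I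

/-- The Hecke congruence subgroup `Γ_I` acts transitively on the primitive `d`-lattices
in `R^D`, `D = d + n`, that are horizontal modulo `I` (i.e. contained in `R^d × I^n`):
every such lattice is the image of `R^d × {0}` by some `g ∈ Γ_I`. -/
theorem hecke_transitive_on_horizontal_primitive_lattices
    (R : Type*) [CommRing R] [Nontrivial R] (I : Ideal R) (d n : ℕ) (hd : 1 ≤ d) (hn : 1 ≤ n)
    (Λ : Submodule R (Fin (d + n) → R)) (hΛ : IsPrimitiveLattice R d n Λ)
    (hΛI : Λ ≤ stdLatticeMod R I d n) :
    ∃ g : Matrix.SpecialLinearGroup (Fin (d + n)) R, MemHecke I d n g ∧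
      Submodule.map
        (Matrix.mulVecLin (g : Matrix (Fin (d + n)) (Fin (d + n)) R))
        (stdLattice R d n) = Λ := by
  classical
  obtain ⟨hfree, hrank, hQfree, hQrank⟩ := hΛ
  obtain ⟨bΛ⟩ := exists_fin_basis_of_rank_eq R Λ d hrank
  obtain ⟨bQ⟩ := exists_fin_basis_of_rank_eq R ((Fin (d + n) → R) ⧸ Λ) n hQrank
  obtain ⟨s, hs⟩ := Module.projective_lifting_property Λ.mkQ LinearMap.id Λ.mkQ_surjective
  set e := splitEquiv' Λ s hs with he
  set B : Module.Basis (Fin (d + n)) R (Fin (d + n) → R) :=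
    ((bΛ.prod bQ).map e).reindex finSumFinEquiv with hBdef
  have hB : ∀ j : Fin d, B (Fin.castAdd n j) = (bΛ j : Fin (d + n) → R) := fun j => by
    rw [hBdef, Module.Basis.reindex_apply, finSumFinEquiv_symm_apply_castAdd, Module.Basis.map_apply,
      Module.Basis.prod_apply]
    simp [he, splitEquiv'_apply]
  -- change of basis matrix
  set M : Matrix (Fin (d + n)) (Fin (d + n)) R := (Pi.basisFun R (Fin (d + n))).toMatrix B
    with hMdef
  have hM : ∀ i j, M i j = B j i := fun i j => by
    rw [hMdef, Module.Basis.toMatrix_apply, Pi.basisFun_repr]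
  have hu : IsUnit M.det :=
    Matrix.isUnit_det_of_right_inverse
      ((Pi.basisFun R (Fin (d + n))).toMatrix_mul_toMatrix_flip B)
  set v : Rˣ := hu.unit with hv
  set ℓ : Fin (d + n) := ⟨d, by omega⟩ with hℓ
  set w : Fin (d + n) → Rˣ := fun i => if i = ℓ then v⁻¹ else 1 with hw
  set B' := B.unitsSMul w with hB'def
  set A : Matrix (Fin (d + n)) (Fin (d + n)) R := Matrix.of fun r c => (B' c) r with hAdef
  have hA : ∀ r c, A r c = (w c : R) * B c r := fun r c => by
    rw [hAdef, Matrix.of_apply, hB'def, Module.Basis.unitsSMul_apply]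
    simp [Units.smul_def]
  have hAeq : A = M * Matrix.diagonal (fun i => (w i : R)) := by
    ext r c
    rw [Matrix.mul_diagonal, hA, hM, mul_comm]
  have hdet : A.det = 1 := by
    rw [hAeq, Matrix.det_mul, Matrix.det_diagonal]
    have h1 : ∏ i, (w i : R) = ((v⁻¹ : Rˣ) : R) := by
      simp [hw, apply_ite (fun u : Rˣ => (u : R)), Finset.prod_ite_eq']
    rw [h1, ← hu.unit_spec, ← hv, ← Units.val_mul, mul_inv_cancel, Units.val_one]
  refine ⟨⟨A, hdet⟩, ?_, ?_⟩
  · -- MemHecke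
    intro i j hi hj
    have hjℓ : j ≠ ℓ := by
      intro h
      rw [hℓ] at h
      have := congrArg Fin.val h
      simp at this
      omega
    have hjc : j = Fin.castAdd n ⟨(j : ℕ), hj⟩ := Fin.ext rfl
    have : (↑(⟨A, hdet⟩ : Matrix.SpecialLinearGroup (Fin (d + n)) R) :
        Matrix (Fin (d + n)) (Fin (d + n)) R) i j = A i j := rfl
    have hwj : w j = 1 := if_neg hjℓ
    rw [this, hA, hwj, Units.val_one, one_mul, hjc, hB]
    exact hΛI (bΛ ⟨(j : ℕ), hj⟩).2 i hi
  · -- map equality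
    have hcol : ∀ j : Fin d, B' (Fin.castAdd n j) = (bΛ j : Fin (d + n) → R) := fun j => by
      have hne : Fin.castAdd n j ≠ ℓ := by
        intro h
        have := congrArg Fin.val h
        rw [hℓ] at this
        simp at this
        omega
      have hwc : w (Fin.castAdd n j) = 1 := if_neg hne
      rw [hB'def, Module.Basis.unitsSMul_apply, hwc, one_smul]
      exact hB j
    have hmvs : ∀ p, A.mulVec (Pi.single p 1) = B' p := fun p => by
      rw [Matrix.mulVec_single, MulOpposite.op_one, one_smul]
      funext r
      change A r p = B' p r
      rw [hA, hB'def, Module.Basis.unitsSMul_apply]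
      simp [Units.smul_def]
    have hsum : ∀ x : Fin (d + n) → R, A.mulVec x = ∑ i, x i • B' i := fun x => by
      funext r
      have hL : A.mulVec x r = ∑ i, A r i * x i := by
        simp [Matrix.mulVec, dotProduct]
      rw [hL, Finset.sum_apply]
      refine Finset.sum_congr rfl fun i _ => ?_
      rw [hA]
      simp only [hB'def, Module.Basis.unitsSMul_apply, Pi.smul_apply, Units.smul_def, smul_eq_mul]
      ring
    have hBmem : ∀ i : Fin (d + n), (i : ℕ) < d → B' i ∈ Λ := fun i hi => by
      have hic : i = Fin.castAdd n ⟨(i : ℕ), hi⟩ := Fin.ext rfl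
      rw [hic, hcol]
      exact (bΛ _).2
    apply le_antisymm
    · rintro y ⟨x, hx, rfl⟩
      rw [Matrix.mulVecLin_apply, hsum]
      refine Submodule.sum_mem Λ fun i _ => ?_
      by_cases hi : (i : ℕ) < d
      · exact Λ.smul_mem _ (hBmem i hi)
      · rw [hx i (le_of_not_gt hi), zero_smul]
        exact Λ.zero_mem
    · have hspan : Λ = Submodule.span R (Set.range fun j : Fin d => (bΛ j : Fin (d + n) → R)) := by
        conv_lhs => rw [← Submodule.map_subtype_top Λ, ← bΛ.span_eq]
        rw [Submodule.map_span]
        congr 1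
        ext x
        simp [Set.range_comp]
      rw [hspan, Submodule.span_le]
      rintro x ⟨j, rfl⟩
      refine ⟨Pi.single (Fin.castAdd n j) 1, ?_, ?_⟩
      · intro i hi
        apply Pi.single_eq_of_ne
        intro h
        have := congrArg Fin.val h
        simp at this
        omega
      · rw [Matrix.mulVecLin_apply, hmvs, hcol]
end

section
/- Let A be a finite commutative ring and let d, n ≥ 1 with D = d + n. Let T be the subgroup of SL_D(A) consisting of block upper triangular matrices [[α, γ],[0, δ]] with α a d×d block, γ a d×n block and δ an n×n block. Then card(T) · card(A^×) = card(GL_d(A)) · card(GL_n(A)) · card(A)^{dn}. -/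
open Matrix

namespace CardBlockAux

variable (A : Type*) [CommRing A] (d n : ℕ)

/-- The product-of-determinants homomorphism `GL_d × GL_n → Aˣ`. -/
def phi : (GL (Fin d) A × GL (Fin n) A) →* Aˣ :=
  (Matrix.GeneralLinearGroup.det.comp (MonoidHom.fst _ _)) *
    (Matrix.GeneralLinearGroup.det.comp (MonoidHom.snd _ _))

variable {A d n}

lemma phi_apply (p : GL (Fin d) A × GL (Fin n) A) :
    ((phi A d n p : Aˣ) : A) =
      (p.1 : Matrix (Fin d) (Fin d) A).det * (p.2 : Matrix (Fin n) (Fin n) A).det := by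
  simp [phi]

lemma phi_surjective (hd : 1 ≤ d) : Function.Surjective (phi A d n) := by
  intro u
  set M : Matrix (Fin d) (Fin d) A :=
    Matrix.diagonal (fun i => if i = (⟨0, hd⟩ : Fin d) then (u : A) else 1) with hM
  have hdet : M.det = (u : A) := by
    rw [hM, Matrix.det_diagonal]
    rw [Finset.prod_ite_eq' Finset.univ (⟨0, hd⟩ : Fin d) (fun _ => (u : A))]
    simp
  refine ⟨(Matrix.GeneralLinearGroup.mk'' M (hdet ▸ u.isUnit), 1), ?_⟩
  apply Units.ext
  rw [phi_apply]
  show M.det * (Matrix.det (1 : Matrix (Fin n) (Fin n) A)) = (u : A)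
  rw [hdet, Matrix.det_one, mul_one]

/-- The kernel of `phi` is equivalent to pairs of matrices with determinants multiplying to 1. -/
noncomputable def kerEquiv :
    (phi A d n).ker ≃
      {q : Matrix (Fin d) (Fin d) A × Matrix (Fin n) (Fin n) A // q.1.det * q.2.det = 1} where
  toFun k := ⟨((k.1.1 : Matrix (Fin d) (Fin d) A), (k.1.2 : Matrix (Fin n) (Fin n) A)), by
    have h := k.2
    rw [MonoidHom.mem_ker] at h
    have := congrArg (Units.val) h
    rwa [phi_apply] at this⟩
  invFun q :=
    ⟨(Matrix.GeneralLinearGroup.mk'' q.1.1 (IsUnit.of_mul_eq_one _ q.2),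
      Matrix.GeneralLinearGroup.mk'' q.1.2
        (IsUnit.of_mul_eq_one _ (by rw [mul_comm]; exact q.2))), by
      rw [MonoidHom.mem_ker]
      apply Units.ext
      rw [phi_apply]
      exact q.2⟩
  left_inv k := by
    apply Subtype.ext
    apply Prod.ext <;> exact Units.ext rfl
  right_inv q := by
    apply Subtype.ext
    rfl

variable (A d n) in
/-- The block upper triangular subgroup of `SL_{d+n}` is equivalent to
(pairs with determinant product 1) × (upper right blocks). -/
noncomputable def blockEquiv :
    {g : Matrix.SpecialLinearGroup (Fin (d + n)) A //
        ∀ i j : Fin (d + n), d ≤ (i : ℕ) → (j : ℕ) < d →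
          (g : Matrix (Fin (d + n)) (Fin (d + n)) A) i j = 0} ≃
      {q : Matrix (Fin d) (Fin d) A × Matrix (Fin n) (Fin n) A // q.1.det * q.2.det = 1} ×
        Matrix (Fin d) (Fin n) A where
  toFun g :=
    (⟨(((g.1 : Matrix (Fin (d + n)) (Fin (d + n)) A).submatrix
          (finSumFinEquiv (m := d) (n := n)) finSumFinEquiv).toBlocks₁₁,
        ((g.1 : Matrix (Fin (d + n)) (Fin (d + n)) A).submatrix
          (finSumFinEquiv (m := d) (n := n)) finSumFinEquiv).toBlocks₂₂), by
      set M := (g.1 : Matrix (Fin (d + n)) (Fin (d + n)) A).submatrix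
        (finSumFinEquiv (m := d) (n := n)) finSumFinEquiv with hMdef
      have h21 : M.toBlocks₂₁ = 0 := by
        ext b a
        exact g.2 _ _ (Nat.le_add_right d b) a.2
      have hM : M = Matrix.fromBlocks M.toBlocks₁₁ M.toBlocks₁₂ 0 M.toBlocks₂₂ := by
        conv_lhs => rw [← Matrix.fromBlocks_toBlocks M]
        rw [h21]
      have hdet : M.det = 1 := by
        rw [hMdef, Matrix.det_submatrix_equiv_self]
        exact g.1.2
      rw [hM, Matrix.det_fromBlocks_zero₂₁] at hdet
      exact hdet⟩,
      ((g.1 : Matrix (Fin (d + n)) (Fin (d + n)) A).submatrix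
          (finSumFinEquiv (m := d) (n := n)) finSumFinEquiv).toBlocks₁₂)
  invFun p :=
    ⟨⟨(Matrix.fromBlocks p.1.1.1 p.2 0 p.1.1.2).submatrix
        (finSumFinEquiv (m := d) (n := n)).symm finSumFinEquiv.symm, by
        rw [Matrix.det_submatrix_equiv_self, Matrix.det_fromBlocks_zero₂₁]
        exact p.1.2⟩, by
      intro i j hi hj
      have hi' : finSumFinEquiv.symm i = Sum.inr (⟨(i : ℕ) - d, by omega⟩ : Fin n) := by
        rw [Equiv.symm_apply_eq, finSumFinEquiv_apply_right]
        apply Fin.ext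
        show (i : ℕ) = d + ((i : ℕ) - d)
        omega
      have hj' : finSumFinEquiv.symm j = Sum.inl (⟨(j : ℕ), hj⟩ : Fin d) := by
        rw [Equiv.symm_apply_eq, finSumFinEquiv_apply_left]
        apply Fin.ext
        rfl
      show (Matrix.fromBlocks p.1.1.1 p.2 0 p.1.1.2).submatrix
        finSumFinEquiv.symm finSumFinEquiv.symm i j = 0
      rw [Matrix.submatrix_apply, hi', hj', Matrix.fromBlocks_apply₂₁]
      rfl⟩
  left_inv g := by
    apply Subtype.ext
    apply Subtype.ext
    show (Matrix.fromBlocks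
        (((g.1 : Matrix (Fin (d + n)) (Fin (d + n)) A).submatrix
          (finSumFinEquiv (m := d) (n := n)) finSumFinEquiv).toBlocks₁₁)
        (((g.1 : Matrix (Fin (d + n)) (Fin (d + n)) A).submatrix
          (finSumFinEquiv (m := d) (n := n)) finSumFinEquiv).toBlocks₁₂)
        0
        (((g.1 : Matrix (Fin (d + n)) (Fin (d + n)) A).submatrix
          (finSumFinEquiv (m := d) (n := n)) finSumFinEquiv).toBlocks₂₂)).submatrix
        finSumFinEquiv.symm finSumFinEquiv.symm = (g.1 : Matrix (Fin (d + n)) (Fin (d + n)) A)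
    have h21 : ((g.1 : Matrix (Fin (d + n)) (Fin (d + n)) A).submatrix
        (finSumFinEquiv (m := d) (n := n)) finSumFinEquiv).toBlocks₂₁ = 0 := by
      ext b a
      exact g.2 _ _ (Nat.le_add_right d b) a.2
    rw [← h21, Matrix.fromBlocks_toBlocks, Matrix.submatrix_submatrix]
    simp
  right_inv p := by
    obtain ⟨⟨⟨a, dl⟩, hq⟩, c⟩ := p
    have key : ((Matrix.fromBlocks a c 0 dl).submatrix
        (finSumFinEquiv (m := d) (n := n)).symm finSumFinEquiv.symm).submatrix
        finSumFinEquiv finSumFinEquiv = Matrix.fromBlocks a c 0 dl := by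
      rw [Matrix.submatrix_submatrix]
      simp
    have e11 := congrArg Matrix.toBlocks₁₁ key
    have e22 := congrArg Matrix.toBlocks₂₂ key
    have e12 := congrArg Matrix.toBlocks₁₂ key
    rw [Matrix.toBlocks_fromBlocks₁₁] at e11
    rw [Matrix.toBlocks_fromBlocks₂₂] at e22
    rw [Matrix.toBlocks_fromBlocks₁₂] at e12
    refine Prod.ext (Subtype.ext ?_) ?_
    · show (_, _) = (a, dl)
      rw [e11, e22]
    · exact e12

end CardBlockAux

open CardBlockAux in
/-- For a finite commutative ring `A` and `D = d + n`, the cardinality of the subgroup `T`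
of `SL_D(A)` of block upper triangular matrices `[[α, γ],[0, δ]]` (with `α` of size `d × d`)
satisfies `card T · card A^× = card GL_d(A) · card GL_n(A) · card A^{dn}`. -/
theorem card_block_upper_triangular_sl
    (A : Type*) [CommRing A] [Finite A] (d n : ℕ) (hd : 1 ≤ d) (hn : 1 ≤ n) :
    Nat.card {g : Matrix.SpecialLinearGroup (Fin (d + n)) A //
        ∀ i j : Fin (d + n), d ≤ (i : ℕ) → (j : ℕ) < d →
          (g : Matrix (Fin (d + n)) (Fin (d + n)) A) i j = 0} *
      Nat.card Aˣ =
    Nat.card (Matrix.GeneralLinearGroup (Fin d) A) *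
      Nat.card (Matrix.GeneralLinearGroup (Fin n) A) * Nat.card A ^ (d * n) := by
  have hT := Nat.card_eq_of_bijective _ (blockEquiv A d n).bijective
  have hK := Nat.card_eq_of_bijective _ (kerEquiv (A := A) (d := d) (n := n)).bijective
  have hMat : Nat.card (Matrix (Fin d) (Fin n) A) = Nat.card A ^ (d * n) := by
    have h0 : Nat.card (Matrix (Fin d) (Fin n) A) = Nat.card (Fin d → Fin n → A) := rfl
    rw [h0, Nat.card_fun, Nat.card_fun, Nat.card_eq_fintype_card (α := Fin d),
      Nat.card_eq_fintype_card (α := Fin n), Fintype.card_fin, Fintype.card_fin,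
      ← pow_mul, Nat.mul_comm n d]
  have hGL : Nat.card (GL (Fin d) A × GL (Fin n) A) =
      Nat.card Aˣ * Nat.card (phi A d n).ker := by
    rw [Subgroup.card_eq_card_quotient_mul_card_subgroup (phi A d n).ker,
      Nat.card_congr (QuotientGroup.quotientKerEquivOfSurjective _
        (phi_surjective hd)).toEquiv]
  rw [hT, Nat.card_prod, ← hK, hMat]
  rw [Nat.card_prod] at hGL
  calc Nat.card (phi A d n).ker * Nat.card A ^ (d * n) * Nat.card Aˣ
      = Nat.card Aˣ * Nat.card (phi A d n).ker * Nat.card A ^ (d * n) := by ring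
    _ = Nat.card (GL (Fin d) A) * Nat.card (GL (Fin n) A) * Nat.card A ^ (d * n) := by
        rw [← hGL]
end

section
/- Let O be a discrete valuation ring whose residue field is finite of cardinality q, let π be a uniformizer of O, and let D ≥ 1. For every N ≥ 1, let H_N be the kernel of the group homomorphism SL_D(O) → SL_D(O/π^N O) given by reduction of entries modulo π^N O. Then H_N has finite index in SL_D(O) and [SL_D(O) : H_N] = q^{N(D²−1) − D(D+1)/2 + 1} · ∏_{i=2}^{D} (q^i − 1). -/
open Ideal

lemma card_eq_card_range_mul_card_ker {G H : Type*} [Group G] [Group H] (f : G →* H) :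
    Nat.card G = Nat.card f.range * Nat.card f.ker := by
  rw [Subgroup.card_eq_card_quotient_mul_card_subgroup f.ker,
    Nat.card_congr (QuotientGroup.quotientKerEquivRange f).toEquiv]

noncomputable def unitsEquivIsUnit (M : Type*) [Monoid M] : Mˣ ≃ {x : M // IsUnit x} where
  toFun u := ⟨u, u.isUnit⟩
  invFun x := x.2.unit
  left_inv u := Units.ext rfl
  right_inv x := Subtype.ext x.2.unit_spec

section DVR

variable (O : Type*) [CommRing O] [IsDomain O] [IsDiscreteValuationRing O]
    (π : O) (hπ : IsLocalRing.maximalIdeal O = Ideal.span {π})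

include hπ

lemma pi_ne_zero : π ≠ 0 := by
  intro h
  exact IsDiscreteValuationRing.not_a_field O (by rw [hπ, h, Ideal.span_singleton_eq_bot.mpr rfl])

lemma span_pi_maximal : (Ideal.span {π}).IsMaximal := hπ ▸ IsLocalRing.maximalIdeal.isMaximal O

lemma card_quot_pow (q : ℕ) (hq : Nat.card (O ⧸ Ideal.span {π}) = q) (k : ℕ) :
    Nat.card (O ⧸ Ideal.span {π} ^ k) = q ^ k := by
  have hmax := span_pi_maximal O π hπ
  have hprime : (Ideal.span {π}).IsPrime := hmax.isPrime
  have hbot : Ideal.span {π} ≠ ⊥ := hπ ▸ IsDiscreteValuationRing.not_a_field O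
  have := cardQuot_pow_of_prime (S := O) (P := Ideal.span {π}) hbot (i := k)
  rwa [Submodule.cardQuot_apply, Submodule.cardQuot_apply, hq] at this

end DVR

section Quot

variable {O : Type*} [CommRing O] [IsDomain O] [IsDiscreteValuationRing O]
    {π : O} (hπ : IsLocalRing.maximalIdeal O = Ideal.span {π}) {N : ℕ} (hN : 1 ≤ N)
    (hle : Ideal.span {π} ^ N ≤ Ideal.span {π})

include hπ hN

lemma ker_rho_equiv :
    Nonempty ((O ⧸ (Ideal.span {π}) ^ (N - 1)) ≃
      {x : O ⧸ (Ideal.span {π}) ^ N // Ideal.Quotient.factor hle x = 0}) := by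
  have hπ0 := pi_ne_zero O π hπ
  set L : O →ₗ[O] (O ⧸ (Ideal.span {π}) ^ N) :=
    { toFun := fun x => Ideal.Quotient.mk _ (π * x)
      map_add' := fun x y => by simp only [mul_add, map_add]
      map_smul' := fun c x => by
        simp only [smul_eq_mul, RingHom.id_apply]
        rw [mul_left_comm]
        exact (Submodule.Quotient.mk_smul _ c (π * x)).symm } with hL
  have hker : (Ideal.span {π} : Ideal O) ^ (N - 1) ≤ LinearMap.ker L := by
    intro x hx
    rw [Ideal.span_singleton_pow, Ideal.mem_span_singleton] at hx
    obtain ⟨c, rfl⟩ := hx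
    simp only [LinearMap.mem_ker, hL, LinearMap.coe_mk, AddHom.coe_mk]
    rw [Ideal.Quotient.eq_zero_iff_mem, Ideal.span_singleton_pow, Ideal.mem_span_singleton]
    exact ⟨c, by rw [← mul_assoc, ← pow_succ']; congr 2; omega⟩
  set F := Submodule.liftQ _ L hker with hF
  have hFmk : ∀ x : O, F (Submodule.Quotient.mk x) = Ideal.Quotient.mk _ (π * x) := fun x => rfl
  have hmem : ∀ y : O ⧸ (Ideal.span {π} : Ideal O) ^ (N - 1),
      Ideal.Quotient.factor hle (F y) = 0 := by
    intro y
    obtain ⟨x, rfl⟩ := Submodule.Quotient.mk_surjective _ y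
    rw [hFmk, Ideal.Quotient.factor_mk, Ideal.Quotient.eq_zero_iff_mem]
    exact Ideal.mul_mem_right _ _ (Ideal.mem_span_singleton_self π)
  refine ⟨Equiv.ofBijective (fun y => ⟨F y, hmem y⟩) ⟨?_, ?_⟩⟩
  · intro y₁ y₂ h
    obtain ⟨x₁, rfl⟩ := Submodule.Quotient.mk_surjective _ y₁
    obtain ⟨x₂, rfl⟩ := Submodule.Quotient.mk_surjective _ y₂
    simp only [Subtype.mk_eq_mk, hFmk] at h
    rw [Ideal.Quotient.mk_eq_mk_iff_sub_mem, Ideal.span_singleton_pow,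
      Ideal.mem_span_singleton, ← mul_sub] at h
    rw [Submodule.Quotient.eq]
    rw [Ideal.span_singleton_pow, Ideal.mem_span_singleton]
    have hNs : N = (N - 1) + 1 := by omega
    rw [hNs, pow_succ'] at h
    exact (mul_dvd_mul_iff_left hπ0).mp h
  · rintro ⟨x, hx⟩
    obtain ⟨z, rfl⟩ := Ideal.Quotient.mk_surjective x
    rw [Ideal.Quotient.factor_mk, Ideal.Quotient.eq_zero_iff_mem,
      Ideal.mem_span_singleton] at hx
    obtain ⟨c, rfl⟩ := hx
    exact ⟨Submodule.Quotient.mk c, Subtype.ext (hFmk c)⟩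

omit hN in
lemma isUnit_iff_rho_ne_zero (x : O ⧸ (Ideal.span {π}) ^ N) :
    IsUnit x ↔ Ideal.Quotient.factor hle x ≠ 0 := by
  have hmax := span_pi_maximal O π hπ
  have hnt : Nontrivial (O ⧸ (Ideal.span {π} : Ideal O)) := Ideal.Quotient.nontrivial_iff.mpr hmax.ne_top
  constructor
  · intro h h0
    have := h.map (Ideal.Quotient.factor hle)
    rw [h0] at this
    exact not_isUnit_zero this
  · intro h
    obtain ⟨y, rfl⟩ := Ideal.Quotient.mk_surjective x
    rw [Ideal.Quotient.factor_mk] at h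
    have hy : y ∉ IsLocalRing.maximalIdeal O := by
      rw [hπ]
      intro hmem
      exact h (Ideal.Quotient.eq_zero_iff_mem.mpr hmem)
    have : IsUnit y := by
      by_contra hu
      exact hy (IsLocalRing.mem_maximalIdeal y |>.mpr hu)
    exact this.map _

end Quot

open Matrix

section GLGeneric

variable {R S : Type*} [CommRing R] [CommRing S] (ρ : R →+* S)

lemma mem_ker_glmap_iff {D : ℕ} (U : GL (Fin D) R) :
    U ∈ MonoidHom.ker (Matrix.GeneralLinearGroup.map (n := Fin D) ρ) ↔
      ρ.mapMatrix U.1 = 1 := by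
  rw [MonoidHom.mem_ker, Units.ext_iff]
  rfl

/-- kernel of entrywise reduction on GL, as matrices `1 + B` with `B` entries in `ker ρ`. -/
noncomputable def glKerEquiv [Nontrivial S] (hunit : ∀ x : R, ρ x ≠ 0 → IsUnit x) (D : ℕ) :
    (MonoidHom.ker (Matrix.GeneralLinearGroup.map (n := Fin D) ρ)) ≃
      (Fin D × Fin D → {x : R // ρ x = 0}) where
  toFun U := fun p => ⟨U.1.1 p.1 p.2 - (1 : Matrix (Fin D) (Fin D) R) p.1 p.2, by
    have hU : ρ.mapMatrix (U.1.1) = 1 := (mem_ker_glmap_iff ρ U.1).mp U.2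
    have h1 : ρ.mapMatrix (1 : Matrix (Fin D) (Fin D) R) = 1 := map_one _
    have e1 := congrFun (congrFun hU p.1) p.2
    have e2 := congrFun (congrFun h1 p.1) p.2
    simp only [RingHom.mapMatrix_apply, Matrix.map_apply] at e1 e2
    rw [map_sub, e1, e2, sub_self]⟩
  invFun B :=
    have h0 : ρ.mapMatrix (Matrix.of fun i j => (B (i, j)).1) = 0 := by
      ext i j
      simpa using (B (i, j)).2
    have hdet : IsUnit (1 + Matrix.of fun i j => (B (i, j)).1 :
        Matrix (Fin D) (Fin D) R).det := by
      apply hunit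
      rw [RingHom.map_det]
      have : ρ.mapMatrix (1 + Matrix.of fun i j => (B (i, j)).1) = 1 := by
        rw [map_add, _root_.map_one, h0, add_zero]
      rw [this, det_one]
      exact one_ne_zero
    ⟨((Matrix.isUnit_iff_isUnit_det _).mpr hdet).unit, by
      rw [mem_ker_glmap_iff]
      rw [IsUnit.unit_spec, map_add, _root_.map_one, h0, add_zero]⟩
  left_inv U := by
    apply Subtype.ext
    apply Units.ext
    show (1 + Matrix.of fun i j => _ : Matrix (Fin D) (Fin D) R) = U.1.1
    ext i j
    simp [Matrix.add_apply]
  right_inv B := by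
    funext p
    apply Subtype.ext
    show (1 + Matrix.of fun i j => (B (i, j)).1 : Matrix (Fin D) (Fin D) R) p.1 p.2
        - (1 : Matrix (Fin D) (Fin D) R) p.1 p.2 = (B p).1
    simp [Matrix.add_apply]

lemma gl_map_surjective [Nontrivial S] (hunit : ∀ x : R, ρ x ≠ 0 → IsUnit x)
    (hsurj : Function.Surjective ρ) (D : ℕ) :
    Function.Surjective (Matrix.GeneralLinearGroup.map (n := Fin D) ρ) := by
  intro V
  obtain ⟨M, hM⟩ : ∃ M : Matrix (Fin D) (Fin D) R, ρ.mapMatrix M = V.1 := by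
    choose f hf using hsurj
    refine ⟨Matrix.of fun i j => f (V.1 i j), ?_⟩
    ext i j
    simpa using hf (V.1 i j)
  have hdet : IsUnit M.det := by
    apply hunit
    rw [RingHom.map_det, hM]
    exact ((Matrix.isUnit_iff_isUnit_det _).mp V.isUnit).ne_zero
  refine ⟨((Matrix.isUnit_iff_isUnit_det _).mpr hdet).unit, Units.ext ?_⟩
  show ρ.mapMatrix _ = V.1
  rw [IsUnit.unit_spec, hM]

lemma det_gl_surjective (D : ℕ) (hD : 1 ≤ D) :
    Function.Surjective (Matrix.GeneralLinearGroup.det : GL (Fin D) R →* Rˣ) := by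
  intro u
  have i0 : Fin D := ⟨0, hD⟩
  set d : Fin D → R := fun i => if i = i0 then (u : R) else 1 with hd
  have hdet : (Matrix.diagonal d).det = (u : R) := by
    rw [Matrix.det_diagonal]
    rw [Finset.prod_eq_single i0 (fun b _ hb => by simp [hd, hb]) (by simp)]
    simp [hd]
  have hu : IsUnit (Matrix.diagonal d).det := hdet ▸ u.isUnit
  refine ⟨((Matrix.isUnit_iff_isUnit_det _).mpr hu).unit, Units.ext ?_⟩
  show (((Matrix.isUnit_iff_isUnit_det _).mpr hu).unit.1).det = (u : R)
  rw [IsUnit.unit_spec, hdet]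

noncomputable def kerDetEquivSL (D : ℕ) :
    (MonoidHom.ker (Matrix.GeneralLinearGroup.det : GL (Fin D) R →* Rˣ)) ≃
      Matrix.SpecialLinearGroup (Fin D) R where
  toFun U := ⟨U.1.1, by
    have : (Matrix.GeneralLinearGroup.det U.1 : R) = 1 := congrArg Units.val U.2
    simpa [Matrix.GeneralLinearGroup.val_det_apply] using this⟩
  invFun S := ⟨Matrix.SpecialLinearGroup.toGL S, by
    rw [MonoidHom.mem_ker]
    apply Units.ext
    show (Matrix.GeneralLinearGroup.det (Matrix.SpecialLinearGroup.toGL S) : R) = 1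
    rw [Matrix.GeneralLinearGroup.val_det_apply]
    exact S.2⟩
  left_inv U := Subtype.ext (Units.ext rfl)
  right_inv S := Subtype.ext rfl

end GLGeneric

section SLSurj

variable {O : Type*} [CommRing O] [IsDomain O] [IsDiscreteValuationRing O]
    {π : O} (hπ : IsLocalRing.maximalIdeal O = Ideal.span {π})

include hπ in
lemma sl_map_surjective {N : ℕ} (hN : 1 ≤ N) {D : ℕ} (hD : 1 ≤ D) :
    Function.Surjective
      (Matrix.SpecialLinearGroup.map (n := Fin D) (Ideal.Quotient.mk (Ideal.span {π} ^ N))) := by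
  intro S
  set mk := Ideal.Quotient.mk (Ideal.span {π} ^ N) with hmk
  obtain ⟨M, hM⟩ : ∃ M : Matrix (Fin D) (Fin D) O, mk.mapMatrix M = S.1 := by
    choose f hf using Ideal.Quotient.mk_surjective (I := Ideal.span {π} ^ N)
    refine ⟨Matrix.of fun i j => f (S.1 i j), ?_⟩
    ext i j
    simpa using hf (S.1 i j)
  have hdet1 : mk M.det = 1 := by rw [RingHom.map_det, hM, S.2]
  have hdetu : IsUnit M.det := by
    have hmem : 1 - M.det ∈ IsLocalRing.maximalIdeal O := by
      rw [hπ]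
      apply Ideal.pow_le_self (show N ≠ 0 by omega)
      rw [← Ideal.Quotient.eq_zero_iff_mem, map_sub, hdet1, _root_.map_one, sub_self]
    have := IsLocalRing.isUnit_one_sub_self_of_mem_nonunits _
      ((IsLocalRing.mem_maximalIdeal _).mp hmem)
    simpa using this
  set v := hdetu.unit with hv
  have hvval : (v : O) = M.det := hdetu.unit_spec
  have i0 : Fin D := ⟨0, hD⟩
  set d : Fin D → O := fun i => if i = i0 then ((v⁻¹ : Oˣ) : O) else 1 with hd
  have hdprod : ∏ i, d i = ((v⁻¹ : Oˣ) : O) := by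
    rw [Finset.prod_eq_single i0 (fun b _ hb => by simp [hd, hb]) (by simp)]
    simp [hd]
  have hdet' : (M * Matrix.diagonal d).det = 1 := by
    rw [Matrix.det_mul, Matrix.det_diagonal, hdprod, ← hvval, Units.mul_inv]
  refine ⟨⟨M * Matrix.diagonal d, hdet'⟩, Subtype.ext ?_⟩
  show mk.mapMatrix (M * Matrix.diagonal d) = S.1
  have hinv1 : mk ((v⁻¹ : Oˣ) : O) = 1 := by
    have h1 : mk ((v : Oˣ) : O) = 1 := by rw [hvval, hdet1]
    calc mk ((v⁻¹ : Oˣ) : O) = mk ((v⁻¹ : Oˣ) : O) * mk ((v : Oˣ) : O) := by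
          rw [h1, mul_one]
      _ = mk (((v⁻¹ * v : Oˣ) : O)) := by rw [← _root_.map_mul]; rfl
      _ = 1 := by simp
  have hdiag : mk.mapMatrix (Matrix.diagonal d) = 1 := by
    rw [RingHom.mapMatrix_apply, Matrix.diagonal_map (map_zero mk)]
    have : (fun i => mk (d i)) = fun _ => 1 := by
      funext i
      by_cases h : i = i0 <;> simp [hd, h, hinv1]
    rw [this, Matrix.diagonal_one]
  rw [_root_.map_mul, hM, hdiag, mul_one]

end SLSurj

lemma prod_pow_sub (X : ℚ) (D : ℕ) (hD : 1 ≤ D) :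
    ∏ i : Fin D, (X ^ D - X ^ (i : ℕ)) =
      X ^ (∑ i ∈ Finset.range D, i) * ((X - 1) * ∏ i ∈ Finset.Icc 2 D, (X ^ i - 1)) := by
  rw [Fin.prod_univ_eq_prod_range (fun i => X ^ D - X ^ i) D]
  have step1 : ∀ i ∈ Finset.range D, X ^ D - X ^ i = X ^ i * (X ^ (D - i) - 1) := by
    intro i hi
    rw [Finset.mem_range] at hi
    rw [mul_sub, mul_one, ← pow_add]
    congr 2
    omega
  rw [Finset.prod_congr rfl step1, Finset.prod_mul_distrib, Finset.prod_pow_eq_pow_sum]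
  congr 1
  have step2 : ∏ i ∈ Finset.range D, (X ^ (D - i) - 1) =
      ∏ i ∈ Finset.range D, (X ^ (i + 1) - 1) := by
    rw [← Finset.prod_range_reflect (fun j => X ^ (j + 1) - 1) D]
    apply Finset.prod_congr rfl
    intro i hi
    rw [Finset.mem_range] at hi
    congr 2
    omega
  rw [step2]
  have step3 : ∏ i ∈ Finset.range D, (X ^ (i + 1) - 1) =
      ∏ i ∈ Finset.Ico 1 (D + 1), (X ^ i - 1) := by
    rw [Finset.prod_Ico_eq_prod_range]
    apply Finset.prod_congr (by congr 1) (fun i _ => by rw [add_comm])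
  rw [step3, Finset.prod_eq_prod_Ico_succ_bot (by omega : 1 < D + 1) (fun i => X ^ i - 1),
    pow_one, Finset.Ico_add_one_right_eq_Icc]

set_option maxHeartbeats 1000000 in
/-- Let `O` be a discrete valuation ring with uniformizer `π` and finite residue field of
cardinality `q`, and let `D ≥ 1`. For `N ≥ 1`, the kernel `H_N` of the reduction morphism
`SL_D(O) → SL_D(O/π^N O)` has finite index, equal to
`q^{N(D²-1) - D(D+1)/2 + 1} ∏_{i=2}^{D} (q^i - 1)`. -/
theorem index_ker_reduction_sl
    (O : Type*) [CommRing O] [IsDomain O] [IsDiscreteValuationRing O]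
    (π : O) (hπ : IsLocalRing.maximalIdeal O = Ideal.span {π})
    (q : ℕ) [Finite (O ⧸ Ideal.span {π})] (hq : Nat.card (O ⧸ Ideal.span {π}) = q)
    (D : ℕ) (hD : 1 ≤ D) (N : ℕ) (hN : 1 ≤ N) :
    (MonoidHom.ker
        (Matrix.SpecialLinearGroup.map (n := Fin D)
          (Ideal.Quotient.mk (Ideal.span {π} ^ N)))).index ≠ 0 ∧
    ((MonoidHom.ker
        (Matrix.SpecialLinearGroup.map (n := Fin D)
          (Ideal.Quotient.mk (Ideal.span {π} ^ N)))).index : ℚ) =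
      (q : ℚ) ^ ((N : ℤ) * ((D : ℤ) ^ 2 - 1) - (D : ℤ) * ((D : ℤ) + 1) / 2 + 1) *
        ∏ i ∈ Finset.Icc 2 D, ((q : ℚ) ^ i - 1) := by
  classical
  obtain ⟨a, rfl⟩ : ∃ a, N = a + 1 := ⟨N - 1, by omega⟩
  obtain ⟨b, rfl⟩ : ∃ b, D = b + 1 := ⟨D - 1, by omega⟩
  have hmax := span_pi_maximal O π hπ
  haveI hmaxI : (Ideal.span {π}).IsMaximal := hmax
  have hle : Ideal.span {π} ^ (a + 1) ≤ Ideal.span {π} := Ideal.pow_le_self (by omega)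
  set ρ := Ideal.Quotient.factor (S := Ideal.span {π} ^ (a + 1)) (T := Ideal.span {π}) hle with hρ
  haveI : Nontrivial (O ⧸ Ideal.span {π}) := Ideal.Quotient.nontrivial_iff.mpr hmax.ne_top
  have hq2 : 2 ≤ q := by
    rw [← hq]
    exact Finite.one_lt_card
  have hcard : ∀ m : ℕ, Nat.card (O ⧸ Ideal.span {π} ^ m) = q ^ m :=
    card_quot_pow O π hπ q hq
  haveI hRfin : Finite (O ⧸ Ideal.span {π} ^ (a + 1)) := by
    have h0 : 0 < Nat.card (O ⧸ Ideal.span {π} ^ (a + 1)) := by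
      rw [hcard]
      positivity
    exact (Nat.card_pos_iff.mp h0).2
  letI : Field (O ⧸ Ideal.span {π}) := Ideal.Quotient.field _
  have hunit : ∀ x : O ⧸ Ideal.span {π} ^ (a + 1), ρ x ≠ 0 → IsUnit x :=
    fun x hx => (isUnit_iff_rho_ne_zero hπ hle x).mpr hx
  have hρsurj : Function.Surjective ρ := by
    intro y
    obtain ⟨z, rfl⟩ := Ideal.Quotient.mk_surjective y
    exact ⟨Ideal.Quotient.mk _ z, Ideal.Quotient.factor_mk hle z⟩
  have hker0 : Nat.card {x : O ⧸ Ideal.span {π} ^ (a + 1) // ρ x = 0} = q ^ a := by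
    obtain ⟨e⟩ := ker_rho_equiv hπ (by omega) hle
    rw [← Nat.card_congr e, hcard]
    congr 1
  -- GL over residue field
  letI : Fintype (O ⧸ Ideal.span {π}) := Fintype.ofFinite _
  have hqcard : Fintype.card (O ⧸ Ideal.span {π}) = q := by
    rw [← Nat.card_eq_fintype_card, hq]
  have hGLk : Nat.card (Matrix.GeneralLinearGroup (Fin (b + 1)) (O ⧸ Ideal.span {π})) =
      ∏ i : Fin (b + 1), (q ^ (b + 1) - q ^ (i : ℕ)) := by
    rw [Matrix.card_GL_field]
    simp [hqcard]
  -- GL over R via reduction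
  set Φ := Matrix.GeneralLinearGroup.map (n := Fin (b + 1)) ρ with hΦ
  have hkerΦ : Nat.card Φ.ker = (q ^ a) ^ ((b + 1) * (b + 1)) := by
    rw [Nat.card_congr (glKerEquiv ρ hunit (b + 1)), Nat.card_fun, hker0]
    congr 1
    simp [Nat.card_eq_fintype_card]
  have hrangeΦ : Nat.card Φ.range =
      Nat.card (Matrix.GeneralLinearGroup (Fin (b + 1)) (O ⧸ Ideal.span {π})) := by
    rw [MonoidHom.range_eq_top.mpr (gl_map_surjective ρ hunit hρsurj (b + 1)), Subgroup.card_top]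
  have hGLR : Nat.card (Matrix.GeneralLinearGroup (Fin (b + 1)) (O ⧸ Ideal.span {π} ^ (a + 1))) =
      (∏ i : Fin (b + 1), (q ^ (b + 1) - q ^ (i : ℕ))) * (q ^ a) ^ ((b + 1) * (b + 1)) := by
    rw [card_eq_card_range_mul_card_ker Φ, hrangeΦ, hGLk, hkerΦ]
  -- GL over R via det
  set δ := (Matrix.GeneralLinearGroup.det :
    Matrix.GeneralLinearGroup (Fin (b + 1)) (O ⧸ Ideal.span {π} ^ (a + 1)) →*
      (O ⧸ Ideal.span {π} ^ (a + 1))ˣ) with hδ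
  have hkerδ : Nat.card δ.ker =
      Nat.card (Matrix.SpecialLinearGroup (Fin (b + 1)) (O ⧸ Ideal.span {π} ^ (a + 1))) :=
    Nat.card_congr (kerDetEquivSL (b + 1))
  have hrangeδ : Nat.card δ.range = Nat.card (O ⧸ Ideal.span {π} ^ (a + 1))ˣ := by
    rw [MonoidHom.range_eq_top.mpr (det_gl_surjective (b + 1) (by omega)), Subgroup.card_top]
  -- card of units
  letI : Fintype (O ⧸ Ideal.span {π} ^ (a + 1)) := Fintype.ofFinite _
  have hunits : Nat.card (O ⧸ Ideal.span {π} ^ (a + 1))ˣ = q ^ (a + 1) - q ^ a := by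
    rw [Nat.card_congr (unitsEquivIsUnit _)]
    rw [Nat.card_congr (Equiv.subtypeEquivRight
      (fun x => (isUnit_iff_rho_ne_zero hπ hle x)))]
    rw [Nat.card_eq_fintype_card, Fintype.card_subtype_compl fun x => ρ x = 0,
      ← Nat.card_eq_fintype_card, ← Nat.card_eq_fintype_card, hker0, hcard]
  -- main counting identity
  set n1 := Nat.card (Matrix.SpecialLinearGroup (Fin (b + 1)) (O ⧸ Ideal.span {π} ^ (a + 1)))
    with hn1
  have key : n1 * (q ^ (a + 1) - q ^ a) =
      (∏ i : Fin (b + 1), (q ^ (b + 1) - q ^ (i : ℕ))) * (q ^ a) ^ ((b + 1) * (b + 1)) := by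
    rw [← hGLR, card_eq_card_range_mul_card_ker δ, hrangeδ, hkerδ, hunits]
    exact Nat.mul_comm _ _
  -- index = n1
  have hidx : (MonoidHom.ker
      (Matrix.SpecialLinearGroup.map (n := Fin (b + 1))
        (Ideal.Quotient.mk (Ideal.span {π} ^ (a + 1))))).index = n1 := by
    rw [Subgroup.index_ker,
      MonoidHom.range_eq_top.mpr (sl_map_surjective hπ (by omega) (by omega)), Subgroup.card_top]
  have hn1pos : 0 < n1 := Nat.card_pos
  refine ⟨by rw [hidx]; omega, ?_⟩
  rw [hidx]
  -- cast to ℚ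
  have hX2 : (2 : ℚ) ≤ (q : ℚ) := by exact_mod_cast hq2
  have hX0 : (q : ℚ) ≠ 0 := by linarith
  have hX1 : (q : ℚ) - 1 ≠ 0 := by linarith
  set t := ∑ i ∈ Finset.range (b + 1), i with ht
  have h2t : 2 * (t : ℤ) = ((b : ℤ) + 1) * b := by
    have h2t' : t * 2 = (b + 1) * b := by simpa using Finset.sum_range_id_mul_two (b + 1)
    zify at h2t'
    linarith
  set e := a * (b * (b + 2)) + t with he
  have hzp : ((↑(a + 1) : ℤ) * ((↑(b + 1) : ℤ) ^ 2 - 1) -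
      (↑(b + 1) : ℤ) * ((↑(b + 1) : ℤ) + 1) / 2 + 1) = (e : ℤ) := by
    have hnum : ((b : ℤ) + 1) * (((b : ℤ) + 1) + 1) = 2 * ((t : ℤ) + b + 1) := by
      linear_combination -h2t
    push_cast
    rw [hnum, Int.mul_ediv_cancel_left _ two_ne_zero]
    push_cast [he]
    linear_combination -h2t
  rw [hzp, zpow_natCast]
  -- cast key to ℚ
  have hcastP : ((∏ i : Fin (b + 1), (q ^ (b + 1) - q ^ (i : ℕ)) : ℕ) : ℚ) =
      ∏ i : Fin (b + 1), ((q : ℚ) ^ (b + 1) - (q : ℚ) ^ (i : ℕ)) := by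
    rw [Nat.cast_prod]
    refine Finset.prod_congr rfl fun i _ => ?_
    rw [Nat.cast_sub (Nat.pow_le_pow_right (by omega) (by omega))]
    push_cast
    ring
  have keyQ : (n1 : ℚ) * ((q : ℚ) ^ (a + 1) - (q : ℚ) ^ a) =
      (∏ i : Fin (b + 1), ((q : ℚ) ^ (b + 1) - (q : ℚ) ^ (i : ℕ))) *
        (q : ℚ) ^ (a * ((b + 1) * (b + 1))) := by
    have h1 : ((n1 * (q ^ (a + 1) - q ^ a) : ℕ) : ℚ) =
        (n1 : ℚ) * ((q : ℚ) ^ (a + 1) - (q : ℚ) ^ a) := by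
      rw [Nat.cast_mul, Nat.cast_sub (Nat.pow_le_pow_right (by omega) (by omega))]
      push_cast
      ring
    have h2 : (((∏ i : Fin (b + 1), (q ^ (b + 1) - q ^ (i : ℕ))) *
          (q ^ a) ^ ((b + 1) * (b + 1)) : ℕ) : ℚ) =
        (∏ i : Fin (b + 1), ((q : ℚ) ^ (b + 1) - (q : ℚ) ^ (i : ℕ))) *
          (q : ℚ) ^ (a * ((b + 1) * (b + 1))) := by
      rw [Nat.cast_mul, hcastP, ← pow_mul]
      push_cast
      ring
    rw [← h1, ← h2, key]
  have hprodid := prod_pow_sub (q : ℚ) (b + 1) (by omega)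
  rw [← ht] at hprodid
  rw [hprodid] at keyQ
  -- final algebra
  have hfac : (q : ℚ) ^ a * ((q : ℚ) - 1) ≠ 0 :=
    mul_ne_zero (pow_ne_zero _ hX0) hX1
  apply mul_right_cancel₀ hfac
  have hexp : t + a * ((b + 1) * (b + 1)) = e + a := by rw [he]; ring
  calc (n1 : ℚ) * ((q : ℚ) ^ a * ((q : ℚ) - 1))
      = (n1 : ℚ) * ((q : ℚ) ^ (a + 1) - (q : ℚ) ^ a) := by rw [pow_succ]; ring
    _ = ((q : ℚ) ^ t * (((q : ℚ) - 1) * ∏ i ∈ Finset.Icc 2 (b + 1), ((q : ℚ) ^ i - 1))) *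
          (q : ℚ) ^ (a * ((b + 1) * (b + 1))) := keyQ
    _ = (q : ℚ) ^ (t + a * ((b + 1) * (b + 1))) *
          (((q : ℚ) - 1) * ∏ i ∈ Finset.Icc 2 (b + 1), ((q : ℚ) ^ i - 1)) := by
        rw [pow_add]; ring
    _ = (q : ℚ) ^ (e + a) *
          (((q : ℚ) - 1) * ∏ i ∈ Finset.Icc 2 (b + 1), ((q : ℚ) ^ i - 1)) := by rw [hexp]
    _ = ((q : ℚ) ^ e * ∏ i ∈ Finset.Icc 2 (b + 1), ((q : ℚ) ^ i - 1)) *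
          ((q : ℚ) ^ a * ((q : ℚ) - 1)) := by rw [pow_add]; ring
end

section
/- Let K be a field equipped with a surjective discrete valuation v: K^× → ℤ, and let π ∈ K with v(π) = 1. Let d, n ≥ 1, D = d + n, ℓ = lcm(d, n). Define: U⁻ = {[[I_d, 0],[β, I_n]] : β an n×d matrix over K}; U⁺ = {[[I_d, γ],[0, I_n]] : γ a d×n matrix over K}; G'' = {block diagonal matrices diag(α, δ) with α ∈ GL_d(K), δ ∈ GL_n(K), v(det α) = 0, v(det δ) = 0 and det(α)·det(δ) = 1}; Z = {diag(π^r I_d, π^s I_n) : r, s ∈ ℤ, dr + ns = 0}; and 𝒰_G = {g ∈ SL_D(K) : the upper-left d×d block α of g is invertible and ℓ divides v(det α)}. Then the product map (u⁻, g'', z, u⁺) ↦ u⁻ g'' z u⁺ is a bijection from U⁻ × G'' × Z × U⁺ onto 𝒰_G. -/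
open Matrix

section Helpers

variable {K : Type*} [Field K]

lemma LU_keyprod {d n : ℕ} (π : K) (r s : ℤ)
    (β : Matrix (Fin n) (Fin d) K) (α : Matrix (Fin d) (Fin d) K)
    (δ : Matrix (Fin n) (Fin n) K) (γ : Matrix (Fin d) (Fin n) K) :
    (fromBlocks 1 0 β 1 : Matrix (Fin d ⊕ Fin n) (Fin d ⊕ Fin n) K) * fromBlocks α 0 0 δ *
      fromBlocks ((π^r) • 1) 0 0 ((π^s) • 1) * fromBlocks 1 γ 0 1
    = fromBlocks ((π^r) • α) ((π^r) • (α*γ)) ((π^r) • (β*α)) ((π^r) • (β*α*γ) + (π^s) • δ) := by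
  simp [Matrix.fromBlocks_multiply, mul_smul_comm, smul_mul_assoc, Matrix.mul_assoc]

lemma zpow_smul_smul_cancel {m p : Type*} (π : K) (hπ0 : π ≠ 0) (c : ℤ)
    (X : Matrix m p K) : (π^c) • ((π^(-c)) • X) = X := by
  rw [smul_smul, ← zpow_add₀ hπ0]; simp

lemma zpow_smul_cancel {m p : Type*} (π : K) (hπ0 : π ≠ 0) (c : ℤ)
    {X Y : Matrix m p K} (h : (π^c) • X = (π^c) • Y) : X = Y := by
  have h2 := congrArg (fun Z => (π^(-c)) • Z) h
  simp only [smul_smul, ← zpow_add₀ hπ0, neg_add_cancel, zpow_zero, one_smul] at h2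
  exact h2

variable (v : K → ℤ) (hmul : ∀ x y : K, x ≠ 0 → y ≠ 0 → v (x * y) = v x + v y)

include hmul

lemma LU_vone : v 1 = 0 := by
  have := hmul 1 1 one_ne_zero one_ne_zero; simp at this; omega

lemma LU_vinv {x : K} (hx : x ≠ 0) : v x⁻¹ = - v x := by
  have := hmul x x⁻¹ hx (inv_ne_zero hx)
  rw [mul_inv_cancel₀ hx, LU_vone v hmul] at this; omega

lemma LU_vzpow (π : K) (hπ0 : π ≠ 0) (hπ : v π = 1) : ∀ r : ℤ, v (π ^ r) = r := by
  intro r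
  induction r using Int.induction_on with
  | zero => simpa using LU_vone v hmul
  | succ k ih => rw [zpow_add_one₀ hπ0, hmul _ _ (zpow_ne_zero _ hπ0) hπ0, ih, hπ]
  | pred k ih =>
    have h := hmul (π ^ (-(k:ℤ) - 1)) π (zpow_ne_zero _ hπ0) hπ0
    rw [← zpow_add_one₀ hπ0] at h
    have h2 : (-(k:ℤ)-1)+1 = -k := by ring
    rw [h2, ih, hπ] at h; omega

lemma LU_vzpow_pow (π : K) (hπ0 : π ≠ 0) (hπ : v π = 1) (r : ℤ) (m : ℕ) :
    v ((π ^ r) ^ m) = r * m := by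
  rw [← zpow_natCast (π^r) m, ← _root_.zpow_mul, LU_vzpow v hmul π hπ0 hπ]

end Helpers

/-- The lower unipotent triangular-by-blocks subgroup `U⁻`. -/
def lowerUnipotent (K : Type*) [Field K] (d n : ℕ) :
    Set (Matrix (Fin d ⊕ Fin n) (Fin d ⊕ Fin n) K) :=
  {M | ∃ β : Matrix (Fin n) (Fin d) K, M = Matrix.fromBlocks 1 0 β 1}

/-- The upper unipotent triangular-by-blocks subgroup `U⁺`. -/
def upperUnipotent (K : Type*) [Field K] (d n : ℕ) :
    Set (Matrix (Fin d ⊕ Fin n) (Fin d ⊕ Fin n) K) :=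
  {M | ∃ γ : Matrix (Fin d) (Fin n) K, M = Matrix.fromBlocks 1 γ 0 1}

/-- The block diagonal subgroup `G'' = (GL¹_d(K) × GL¹_n(K)) ∩ SL_{d+n}(K)`: block diagonal
matrices `diag(α, δ)` with `v(det α) = v(det δ) = 0` and `det α · det δ = 1`. -/
def blockDiagUnimodular (K : Type*) [Field K] (v : K → ℤ) (d n : ℕ) :
    Set (Matrix (Fin d ⊕ Fin n) (Fin d ⊕ Fin n) K) :=
  {M | ∃ (α : Matrix (Fin d) (Fin d) K) (δ : Matrix (Fin n) (Fin n) K),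
    M = Matrix.fromBlocks α 0 0 δ ∧ α.det ≠ 0 ∧ δ.det ≠ 0 ∧
      v α.det = 0 ∧ v δ.det = 0 ∧ α.det * δ.det = 1}

/-- The discrete subgroup `Z` of matrices `diag(π^r I_d, π^s I_n)` with `dr + ns = 0`. -/
def centralPart (K : Type*) [Field K] (π : K) (d n : ℕ) :
    Set (Matrix (Fin d ⊕ Fin n) (Fin d ⊕ Fin n) K) :=
  {M | ∃ r s : ℤ, (d : ℤ) * r + (n : ℤ) * s = 0 ∧
    M = Matrix.fromBlocks ((π ^ r) • (1 : Matrix (Fin d) (Fin d) K)) 0 0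
      ((π ^ s) • (1 : Matrix (Fin n) (Fin n) K))}

/-- The subset `𝒰_G` of `SL_{d+n}(K)` of matrices whose upper left `d × d` block `α` is
invertible with `lcm(d,n) ∣ v(det α)`. -/
def bigCell (K : Type*) [Field K] (v : K → ℤ) (d n : ℕ) :
    Set (Matrix (Fin d ⊕ Fin n) (Fin d ⊕ Fin n) K) :=
  {M | M.det = 1 ∧ M.toBlocks₁₁.det ≠ 0 ∧ (Nat.lcm d n : ℤ) ∣ v M.toBlocks₁₁.det}

/-- Refined LU decomposition by blocks: for a field `K` with a surjective discrete valuation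
`v : K^× → ℤ` and uniformizer `π`, the product map `(u⁻, g'', z, u⁺) ↦ u⁻ g'' z u⁺` is a
bijection from `U⁻ × G'' × Z × U⁺` onto `𝒰_G ⊆ SL_{d+n}(K)`. -/
theorem refined_LU_decomposition
    (K : Type*) [Field K] (v : K → ℤ)
    (hmul : ∀ x y : K, x ≠ 0 → y ≠ 0 → v (x * y) = v x + v y)
    (hadd : ∀ x y : K, x ≠ 0 → y ≠ 0 → x + y ≠ 0 → min (v x) (v y) ≤ v (x + y))
    (hsurj : ∀ m : ℤ, ∃ x : K, x ≠ 0 ∧ v x = m)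
    (π : K) (hπ0 : π ≠ 0) (hπ : v π = 1)
    (d n : ℕ) (hd : 1 ≤ d) (hn : 1 ≤ n) :
    Set.BijOn
      (fun x : Matrix (Fin d ⊕ Fin n) (Fin d ⊕ Fin n) K ×
          Matrix (Fin d ⊕ Fin n) (Fin d ⊕ Fin n) K ×
          Matrix (Fin d ⊕ Fin n) (Fin d ⊕ Fin n) K ×
          Matrix (Fin d ⊕ Fin n) (Fin d ⊕ Fin n) K =>
        x.1 * x.2.1 * x.2.2.1 * x.2.2.2)
      (lowerUnipotent K d n ×ˢ (blockDiagUnimodular K v d n ×ˢ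
        (centralPart K π d n ×ˢ upperUnipotent K d n)))
      (bigCell K v d n) := by
  clear hadd hsurj
  have hπd : ∀ (r : ℤ) (m : ℕ), ((π^r : K))^m ≠ 0 := fun r m => pow_ne_zero _ (zpow_ne_zero _ hπ0)
  have hlcm : (Int.lcm (d:ℤ) (n:ℤ) : ℤ) = ((Nat.lcm d n : ℕ) : ℤ) := by
    simp [Int.lcm]
  refine ⟨?_, ?_, ?_⟩
  · -- MapsTo
    rintro ⟨u, g, z, w⟩ ⟨⟨β, rfl⟩, ⟨α, δ, rfl, hα0, hδ0, hvα, hvδ, hαδ⟩, ⟨r, s, hrs, rfl⟩, ⟨γ, rfl⟩⟩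
    simp only [bigCell, Set.mem_setOf_eq]
    have hz1 : ((π^r : K))^d * ((π^s : K))^n = 1 := by
      rw [← zpow_natCast (π^r) d, ← zpow_natCast (π^s) n, ← _root_.zpow_mul,
        ← _root_.zpow_mul, ← zpow_add₀ hπ0]
      have h0 : r*(d:ℤ) + s*(n:ℤ) = 0 := by linarith
      rw [h0, zpow_zero]
    refine ⟨?_, ?_, ?_⟩
    · rw [det_mul, det_mul, det_mul, det_fromBlocks_zero₁₂, det_fromBlocks_zero₁₂,
        det_fromBlocks_zero₁₂, det_fromBlocks_zero₂₁]
      simp only [det_one, det_smul, Fintype.card_fin, mul_one, one_mul]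
      linear_combination (((π^r : K))^d * ((π^s : K))^n) * hαδ + hz1
    · rw [LU_keyprod, toBlocks_fromBlocks₁₁, det_smul, Fintype.card_fin]
      exact mul_ne_zero (hπd r d) hα0
    · rw [LU_keyprod, toBlocks_fromBlocks₁₁, det_smul, Fintype.card_fin,
        hmul _ _ (hπd r d) hα0, LU_vzpow_pow v hmul π hπ0 hπ, hvα, add_zero]
      rw [← hlcm]
      refine Int.coe_lcm_dvd ⟨r, by ring⟩ ⟨-s, by linarith⟩
  · -- InjOn
    rintro ⟨u1, g1, z1, w1⟩ ⟨⟨β1, rfl⟩, ⟨α1, δ1, rfl, hα1, hδ1, hvα1, hvδ1, hαδ1⟩,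
      ⟨r1, s1, hrs1, rfl⟩, ⟨γ1, rfl⟩⟩
      ⟨u2, g2, z2, w2⟩ ⟨⟨β2, rfl⟩, ⟨α2, δ2, rfl, hα2, hδ2, hvα2, hvδ2, hαδ2⟩,
      ⟨r2, s2, hrs2, rfl⟩, ⟨γ2, rfl⟩⟩ heq
    simp only [LU_keyprod] at heq
    have h11 := congrArg Matrix.toBlocks₁₁ heq
    have h12 := congrArg Matrix.toBlocks₁₂ heq
    have h21 := congrArg Matrix.toBlocks₂₁ heq
    have h22 := congrArg Matrix.toBlocks₂₂ heq
    simp only [toBlocks_fromBlocks₁₁, toBlocks_fromBlocks₁₂, toBlocks_fromBlocks₂₁,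
      toBlocks_fromBlocks₂₂] at h11 h12 h21 h22
    -- r1 = r2
    have hdet := congrArg Matrix.det h11
    rw [det_smul, det_smul, Fintype.card_fin] at hdet
    have hv := congrArg v hdet
    rw [hmul _ _ (hπd r1 d) hα1, hmul _ _ (hπd r2 d) hα2,
      LU_vzpow_pow v hmul π hπ0 hπ, LU_vzpow_pow v hmul π hπ0 hπ, hvα1, hvα2] at hv
    have hr : r1 = r2 := by
      have hd' : (0:ℤ) < (d:ℤ) := by exact_mod_cast hd
      have : r1 * (d:ℤ) = r2 * (d:ℤ) := by omega
      exact mul_right_cancel₀ (by omega) this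
    subst hr
    have hs : s1 = s2 := by
      have hn' : (n:ℤ) ≠ 0 := by positivity
      have : (n:ℤ) * s1 = (n:ℤ) * s2 := by linarith
      exact mul_left_cancel₀ hn' this
    subst hs
    have hα : α1 = α2 := zpow_smul_cancel π hπ0 r1 h11
    subst hα
    have hU : IsUnit α1.det := isUnit_iff_ne_zero.mpr hα1
    have hβ : β1 = β2 := by
      have h := zpow_smul_cancel π hπ0 r1 h21
      have h' := congrArg (fun X => X * α1⁻¹) h
      simpa [Matrix.mul_assoc, Matrix.mul_nonsing_inv _ hU] using h'
    subst hβ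
    have hγ : γ1 = γ2 := by
      have h := zpow_smul_cancel π hπ0 r1 h12
      have h' := congrArg (fun X => α1⁻¹ * X) h
      simpa [← Matrix.mul_assoc, Matrix.nonsing_inv_mul _ hU] using h'
    subst hγ
    have hδ : δ1 = δ2 := zpow_smul_cancel π hπ0 s1 (by
      have := add_left_cancel h22
      exact this)
    rw [hδ]
  · -- SurjOn
    rintro M ⟨hdet1, hA0, hdvd⟩
    set A := M.toBlocks₁₁ with hA
    set B := M.toBlocks₁₂ with hB
    set C := M.toBlocks₂₁ with hC
    set D := M.toBlocks₂₂ with hD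
    obtain ⟨t, ht⟩ := hdvd
    have hdL : d ∣ Nat.lcm d n := Nat.dvd_lcm_left d n
    have hnL : n ∣ Nat.lcm d n := Nat.dvd_lcm_right d n
    obtain ⟨a, ha⟩ := hdL
    obtain ⟨b, hb⟩ := hnL
    have ha' : (d:ℤ) * (a:ℤ) = (Nat.lcm d n : ℤ) := by exact_mod_cast ha.symm
    have hb' : (n:ℤ) * (b:ℤ) = (Nat.lcm d n : ℤ) := by exact_mod_cast hb.symm
    set r : ℤ := t * a with hrdef
    set s : ℤ := -(t * b) with hsdef
    have hU : IsUnit A.det := isUnit_iff_ne_zero.mpr hA0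
    haveI : Invertible A := A.invertibleOfIsUnitDet hU
    have hSchur : A.det * (D - C * A⁻¹ * B).det = 1 := by
      have h := Matrix.det_fromBlocks₁₁ A B C D
      rw [invOf_eq_nonsing_inv] at h
      rw [hA, hB, hC, hD, fromBlocks_toBlocks, hdet1] at h
      exact h.symm
    have hE0 : (D - C * A⁻¹ * B).det ≠ 0 := by
      intro h; rw [h, mul_zero] at hSchur; exact zero_ne_one hSchur
    have hEdet : (D - C * A⁻¹ * B).det = A.det⁻¹ :=
      eq_inv_of_mul_eq_one_right hSchur
    have hrd : r * (d:ℤ) = (Nat.lcm d n : ℤ) * t := by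
      rw [hrdef]; linear_combination t * ha'
    have hsn : s * (n:ℤ) = -((Nat.lcm d n : ℤ) * t) := by
      rw [hsdef]; linear_combination (-t) * hb'
    refine ⟨⟨fromBlocks 1 0 (C * A⁻¹) 1,
      fromBlocks ((π^(-r)) • A) 0 0 ((π^(-s)) • (D - C * A⁻¹ * B)),
      fromBlocks ((π^r) • 1) 0 0 ((π^s) • 1),
      fromBlocks 1 (A⁻¹ * B) 0 1⟩,
      ⟨⟨_, rfl⟩, ⟨_, _, rfl, ?_, ?_, ?_, ?_, ?_⟩, ⟨r, s, ?_, rfl⟩, ⟨_, rfl⟩⟩, ?_⟩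
    · rw [det_smul, Fintype.card_fin]
      exact mul_ne_zero (hπd (-r) d) hA0
    · rw [det_smul, Fintype.card_fin]
      exact mul_ne_zero (hπd (-s) n) hE0
    · rw [det_smul, Fintype.card_fin, hmul _ _ (hπd (-r) d) hA0,
        LU_vzpow_pow v hmul π hπ0 hπ, ht]
      linarith [hrd]
    · rw [det_smul, Fintype.card_fin, hmul _ _ (hπd (-s) n) hE0,
        LU_vzpow_pow v hmul π hπ0 hπ, hEdet, LU_vinv v hmul hA0, ht]
      linarith [hsn]
    · rw [det_smul, det_smul, Fintype.card_fin, Fintype.card_fin, hEdet]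
      have hπz : ((π^(-r) : K))^d * ((π^(-s) : K))^n = 1 := by
        rw [← zpow_natCast (π^(-r)) d, ← zpow_natCast (π^(-s)) n, ← _root_.zpow_mul,
          ← _root_.zpow_mul, ← zpow_add₀ hπ0]
        have h0 : -r*(d:ℤ) + -s*(n:ℤ) = 0 := by linarith [hrd, hsn]
        rw [h0, zpow_zero]
      have hAA : A.det * A.det⁻¹ = 1 := mul_inv_cancel₀ hA0
      linear_combination A.det * A.det⁻¹ * hπz + hAA
    · linarith [hrd, hsn]
    · simp only [LU_keyprod]
      have e1 : (π^r) • ((π^(-r)) • A) = A := zpow_smul_smul_cancel π hπ0 r A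
      have e2 : (π^r) • (((π^(-r)) • A) * (A⁻¹ * B)) = B := by
        rw [Matrix.smul_mul, zpow_smul_smul_cancel π hπ0, ← Matrix.mul_assoc,
          Matrix.mul_nonsing_inv _ hU, Matrix.one_mul]
      have e3 : (π^r) • ((C * A⁻¹) * ((π^(-r)) • A)) = C := by
        rw [Matrix.mul_smul, zpow_smul_smul_cancel π hπ0, Matrix.mul_assoc,
          Matrix.nonsing_inv_mul _ hU, Matrix.mul_one]
      have e4 : (π^r) • ((C * A⁻¹) * ((π^(-r)) • A) * (A⁻¹ * B)) +
          (π^s) • ((π^(-s)) • (D - C * A⁻¹ * B)) = D := by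
        rw [Matrix.mul_smul, Matrix.smul_mul, zpow_smul_smul_cancel π hπ0,
          zpow_smul_smul_cancel π hπ0]
        have hx : C * A⁻¹ * A * (A⁻¹ * B) = C * A⁻¹ * B := by
          rw [Matrix.mul_assoc C A⁻¹ A, Matrix.nonsing_inv_mul _ hU, Matrix.mul_one,
            ← Matrix.mul_assoc]
        rw [hx]
        abel
      rw [e1, e2, e3, e4, hA, hB, hC, hD, fromBlocks_toBlocks]
end

section
/- Let O be a principal ideal domain (for instance a discrete valuation ring) with fraction field K, let D ≥ 1 and 1 ≤ k ≤ D. For every k-dimensional K-linear subspace W of K^D, there exists g ∈ SL_D(O) (viewed inside SL_D(K)) such that g(K^k × {0}) = W. In particular, SL_D(O), and a fortiori GL_D(O), acts transitively on the Grassmannian of k-dimensional subspaces of K^D. -/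
/-- The `K`-subspace `K^k × {0}` of `K^D` spanned by the first `k` standard basis
vectors, i.e. the vectors whose last `D - k` coordinates vanish. -/
def stdSubspace (K : Type*) [Field K] (D k : ℕ) : Submodule K (Fin D → K) where
  carrier := {x | ∀ i : Fin D, k ≤ (i : ℕ) → x i = 0}
  add_mem' := fun ha hb i hi => by simp [ha i hi, hb i hi]
  zero_mem' := fun i _ => rfl
  smul_mem' := fun c x hx i hi => by simp [hx i hi]

lemma mem_stdSubspace {K : Type*} [Field K] {D k : ℕ} {x : Fin D → K} :
    x ∈ stdSubspace K D k ↔ ∀ i : Fin D, k ≤ (i : ℕ) → x i = 0 := Iff.rfl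

lemma span_smul_range_eq {K V ι : Type*} [Field K] [AddCommGroup V] [Module K V]
    (c : ι → K) (hc : ∀ i, c i ≠ 0) (v : ι → V) :
    Submodule.span K (Set.range fun i => c i • v i) = Submodule.span K (Set.range v) := by
  apply le_antisymm <;> rw [Submodule.span_le] <;> rintro _ ⟨i, rfl⟩
  · exact Submodule.smul_mem _ _ (Submodule.subset_span ⟨i, rfl⟩)
  · have h : v i = (c i)⁻¹ • (c i • v i) := by
      rw [smul_smul, inv_mul_cancel₀ (hc i), one_smul]
    rw [h]
    exact Submodule.smul_mem _ _ (Submodule.subset_span ⟨i, rfl⟩)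

lemma stdSubspace_eq_span (K : Type*) [Field K] (D k : ℕ) (hkD : k ≤ D) :
    stdSubspace K D k =
      Submodule.span K (Set.range fun j : Fin k =>
        (Pi.single (Fin.castLE hkD j) 1 : Fin D → K)) := by
  apply le_antisymm
  · intro x hx
    have hx' : x = ∑ i : Fin D, Pi.single i (x i) := by
      ext j; simp
    rw [hx']
    apply Submodule.sum_mem
    intro i _
    by_cases h : (i : ℕ) < k
    · have h1 : (Pi.single i (x i) : Fin D → K) = x i • (Pi.single (Fin.castLE hkD ⟨(i : ℕ), h⟩) 1 : Fin D → K) := by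
        have : Fin.castLE hkD ⟨(i : ℕ), h⟩ = i := by ext; rfl
        rw [this, ← Pi.single_smul, smul_eq_mul, mul_one]
      rw [h1]
      exact Submodule.smul_mem _ _ (Submodule.subset_span ⟨⟨(i : ℕ), h⟩, rfl⟩)
    · rw [hx i (not_lt.mp h), Pi.single_zero]
      exact Submodule.zero_mem _
  · rw [Submodule.span_le]
    rintro _ ⟨j, rfl⟩
    intro i hi
    apply Pi.single_eq_of_ne
    intro h
    rw [h] at hi
    simp at hi
    omega

/-- Let `O` be a principal ideal domain with fraction field `K` and `1 ≤ k ≤ D`. Then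
`SL_D(O)` acts transitively on the Grassmannian of `k`-dimensional subspaces of `K^D`:
every `k`-dimensional subspace `W` of `K^D` is the image of `K^k × {0}` by some
`g ∈ SL_D(O)`. -/
theorem sl_integers_transitive_on_grassmannian
    (O K : Type*) [CommRing O] [IsDomain O] [IsPrincipalIdealRing O]
    [Field K] [Algebra O K] [IsFractionRing O K]
    (D k : ℕ) (hk : 1 ≤ k) (hkD : k ≤ D)
    (W : Submodule K (Fin D → K)) (hW : Module.finrank K W = k) :
    ∃ g : Matrix.SpecialLinearGroup (Fin D) O,
      Submodule.map
        (Matrix.mulVecLin ((g : Matrix (Fin D) (Fin D) O).map (algebraMap O K)))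
        (stdSubspace K D k) = W := by
  classical
  rcases hkD.eq_or_lt with rfl | hkD'
  · -- k = D : W = ⊤ and g = 1 works
    refine ⟨1, ?_⟩
    have h1 : stdSubspace K k k = ⊤ := by
      rw [eq_top_iff]
      intro x _ i hi
      exact absurd hi (not_le.mpr i.isLt)
    have h2 : W = ⊤ := by
      apply Submodule.eq_top_of_finrank_eq
      rw [hW, Module.finrank_pi, Fintype.card_fin]
    rw [h1, h2]
    simp [Matrix.SpecialLinearGroup.coe_one,
      Matrix.map_one _ (map_zero _) (map_one _)]
  · -- k < D
    let φ : (Fin D → O) →ₗ[O] (Fin D → K) :=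
      { toFun := fun x i => algebraMap O K (x i)
        map_add' := by intro x y; funext i; simp
        map_smul' := by intro c x; funext i; simp [Algebra.smul_def] }
    have hφ : ∀ (x : Fin D → O) (i : Fin D), φ x i = algebraMap O K (x i) := fun _ _ => rfl
    let L : Submodule O (Fin D → O) := (W.restrictScalars O).comap φ
    obtain ⟨n, bM, bN, f, a, hsnf⟩ := L.smithNormalForm (Pi.basisFun O (Fin D))
    have hmemW : ∀ y ∈ L, φ y ∈ W := fun y hy => hy
    have hLspan : ∀ y ∈ L, φ y ∈ Submodule.span K
        (Set.range fun i : Fin n => φ (bN i : Fin D → O)) := by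
      intro y hy
      set c := bN.repr ⟨y, hy⟩ with hc
      have h1 : (((∑ i, c i • bN i : L) : Fin D → O)) = y := by
        rw [hc, Module.Basis.sum_repr bN ⟨y, hy⟩]
      have h2 : y = ∑ i, c i • (bN i : Fin D → O) := by
        rw [← h1]; simp
      rw [h2, map_sum]
      apply Submodule.sum_mem
      intro i _
      rw [map_smul, ← algebraMap_smul K (c i) (φ (bN i : Fin D → O))]
      exact Submodule.smul_mem _ _ (Submodule.subset_span ⟨i, rfl⟩)
    have hspan : Submodule.span K (Set.range fun i : Fin n => φ (bN i : Fin D → O)) = W := by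
      apply le_antisymm
      · rw [Submodule.span_le]
        rintro _ ⟨i, rfl⟩
        exact hmemW _ (bN i).2
      · intro w hw
        obtain ⟨b, hb⟩ := IsLocalization.exist_integer_multiples
          (nonZeroDivisors O) Finset.univ w
        choose x hx using fun i => hb i (Finset.mem_univ i)
        have hfx : φ x = algebraMap O K (b : O) • w := by
          funext i
          rw [hφ, hx i, Algebra.smul_def]; rfl
        have hxL : φ x ∈ Submodule.span K
            (Set.range fun i : Fin n => φ (bN i : Fin D → O)) := by
          apply hLspan
          show φ x ∈ W.restrictScalars O
          rw [hfx]
          exact Submodule.smul_mem _ _ hw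
        have hb0 : algebraMap O K (b : O) ≠ 0 := by
          have hbne := nonZeroDivisors.coe_ne_zero b
          exact fun h => hbne ((map_eq_zero_iff _ (IsFractionRing.injective O K)).mp h)
        have hw' : w = (algebraMap O K (b : O))⁻¹ • φ x := by
          rw [hfx, smul_smul, inv_mul_cancel₀ hb0, one_smul]
        rw [hw']
        exact Submodule.smul_mem _ _ hxL
    have ha : ∀ i, algebraMap O K (a i) ≠ 0 := by
      intro i h
      have h0 : a i = 0 := (map_eq_zero_iff _ (IsFractionRing.injective O K)).mp h
      apply bN.ne_zero i
      have hz : (bN i : Fin D → O) = 0 := by rw [hsnf i, h0, zero_smul]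
      exact Subtype.ext hz
    have hspan2 : Submodule.span K (Set.range fun i : Fin n => φ (bM (f i))) = W := by
      rw [← hspan]
      have hfeq : (fun i : Fin n => φ (bN i : Fin D → O)) =
          fun i => algebraMap O K (a i) • φ (bM (f i)) := by
        funext i
        rw [hsnf i, map_smul, algebraMap_smul]
      rw [hfeq, span_smul_range_eq _ ha]
    have hBM : IsUnit ((Pi.basisFun O (Fin D)).toMatrix bM).det := by
      rw [← Module.Basis.det_apply]
      exact (Pi.basisFun O (Fin D)).isUnit_det bM
    have hvindep : LinearIndependent K (fun j : Fin D => φ (bM j)) := by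
      rw [Fintype.linearIndependent_iff]
      intro g hg
      set M : Matrix (Fin D) (Fin D) K :=
        ((Pi.basisFun O (Fin D)).toMatrix bM).map (algebraMap O K) with hM
      have hMdet : IsUnit M.det := by
        have hdm : M.det = algebraMap O K ((Pi.basisFun O (Fin D)).toMatrix bM).det := by
          rw [hM]
          exact (RingHom.map_det (algebraMap O K) _).symm
        rw [hdm]
        apply isUnit_iff_ne_zero.mpr
        obtain ⟨v, hv⟩ := hBM
        rw [← hv]
        exact fun h => v.ne_zero ((map_eq_zero_iff _ (IsFractionRing.injective O K)).mp h)
      have hmv : M.mulVec g = 0 := by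
        funext i
        have hgi := congrFun hg i
        simp only [Finset.sum_apply, Pi.smul_apply, Pi.zero_apply, smul_eq_mul] at hgi
        show (∑ j, M i j * g j) = 0
        rw [← hgi]
        refine Finset.sum_congr rfl fun j _ => ?_
        rw [hM]
        show algebraMap O K ((Pi.basisFun O (Fin D)).toMatrix bM i j) * g j = _
        rw [Module.Basis.toMatrix_apply, Pi.basisFun_repr, hφ, mul_comm]
      intro j
      have hg0 : g = 0 := by
        have h1 : M⁻¹.mulVec (M.mulVec g) = g := by
          rw [Matrix.mulVec_mulVec, Matrix.nonsing_inv_mul _ hMdet, Matrix.one_mulVec]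
        rw [hmv, Matrix.mulVec_zero] at h1
        exact h1.symm
      rw [hg0]; rfl
    have hnk : n = k := by
      apply le_antisymm
      · have hind : LinearIndependent K ((fun j : Fin D => φ (bM j)) ∘ f) :=
          hvindep.comp f f.injective
        have hmem : ∀ i : Fin n, φ (bM (f i)) ∈ W := by
          intro i
          rw [← hspan2]
          exact Submodule.subset_span ⟨i, rfl⟩
        let uu : Fin n → W := fun i => ⟨φ (bM (f i)), hmem i⟩
        have hu : LinearIndependent K uu := by
          apply LinearIndependent.of_comp W.subtype
          exact hind
        simpa [hW] using hu.fintype_card_le_finrank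
      · have hle := finrank_range_le_card (R := K) (fun i : Fin n => φ (bM (f i)))
        rw [Set.finrank, hspan2, hW] at hle
        simpa using hle
    subst hnk
    have hcard : Fintype.card ↥(Set.range ⇑f) = n := by
      rw [Set.card_range_of_injective f.injective, Fintype.card_fin]
    have hcompl : Fintype.card ↥(Set.range ⇑f)ᶜ = D - n := by
      rw [Fintype.card_compl_set, hcard, Fintype.card_fin]
    let e1 : Fin n ⊕ Fin (D - n) ≃ Fin D :=
      finSumFinEquiv.trans (finCongr (Nat.add_sub_cancel' hkD))
    let e2 : Fin n ⊕ Fin (D - n) ≃ Fin D :=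
      (Equiv.sumCongr (Equiv.ofInjective ⇑f f.injective)
        (Fintype.equivFinOfCardEq hcompl).symm).trans (Equiv.Set.sumCompl (Set.range ⇑f))
    let σ : Equiv.Perm (Fin D) := e1.symm.trans e2
    have hσ : ∀ j : Fin n, σ (Fin.castLE hkD j) = f j := by
      intro j
      have h1 : e1 (Sum.inl j) = Fin.castLE hkD j := by
        ext
        simp [e1]
      have h2 : e1.symm (Fin.castLE hkD j) = Sum.inl j := by
        rw [← h1, Equiv.symm_apply_apply]
      show e2 (e1.symm (Fin.castLE hkD j)) = f j
      rw [h2]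
      simp [e2]
    let bM' := bM.reindex σ.symm
    have hbM' : ∀ i, bM' i = bM (σ i) := by intro i; simp [bM']
    let B : Matrix (Fin D) (Fin D) O := (Pi.basisFun O (Fin D)).toMatrix bM'
    have hBdet : IsUnit B.det := by
      rw [← Module.Basis.det_apply]
      exact (Pi.basisFun O (Fin D)).isUnit_det bM'
    let u := hBdet.unit
    have hD1 : D - 1 < D := by omega
    let lastIdx : Fin D := ⟨D - 1, hD1⟩
    let A := B.updateCol lastIdx ((↑u⁻¹ : O) • fun i => B i lastIdx)
    have hdetA : A.det = 1 := by
      show (B.updateCol lastIdx ((↑u⁻¹ : O) • fun i => B i lastIdx)).det = 1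
      rw [Matrix.det_updateCol_smul, Matrix.updateCol_eq_self]
      show (↑u⁻¹ : O) * B.det = 1
      rw [← hBdet.unit_spec]
      exact Units.inv_mul u
    refine ⟨⟨A, hdetA⟩, ?_⟩
    have hA : ∀ (i : Fin D) (j : Fin n), A i (Fin.castLE hkD j) = bM (f j) i := by
      intro i j
      have hne : Fin.castLE hkD j ≠ lastIdx := by
        intro h
        have hval := congrArg Fin.val h
        simp [lastIdx, Fin.castLE] at hval
        omega
      show (B.updateCol lastIdx ((↑u⁻¹ : O) • fun i => B i lastIdx)) i (Fin.castLE hkD j)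
        = bM (f j) i
      rw [Matrix.updateCol_ne hne]
      show (Pi.basisFun O (Fin D)).toMatrix bM' i (Fin.castLE hkD j) = bM (f j) i
      rw [Module.Basis.toMatrix_apply, Pi.basisFun_repr, hbM' (Fin.castLE hkD j), hσ j]
    have hfun : ((Matrix.mulVecLin (A.map (algebraMap O K))) ∘
        fun j : Fin n => (Pi.single (Fin.castLE hkD j) 1 : Fin D → K)) =
        fun j : Fin n => φ (bM (f j)) := by
      funext j
      show (A.map (algebraMap O K)).mulVec (Pi.single (Fin.castLE hkD j) 1) = φ (bM (f j))
      rw [Matrix.mulVec_single]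
      funext i
      show (A.map (algebraMap O K)) i (Fin.castLE hkD j) * 1 = φ (bM (f j)) i
      rw [mul_one, Matrix.map_apply, hA i j, hφ]
    show Submodule.map (Matrix.mulVecLin (A.map (algebraMap O K))) (stdSubspace K D n) = W
    rw [stdSubspace_eq_span K D n hkD, Submodule.map_span, ← Set.range_comp, hfun, hspan2]
end

section
/- Let K be a field equipped with a valuation with valuation ring O_v ⊆ K, and let d, n ≥ 1 with D = d + n. For every g ∈ GL_D(K) there exists a permutation matrix σ ∈ GL_D(K) such that, writing σg in blocks [[α, γ],[β, δ]] with α of size d×d, the matrix α is invertible and every entry of β α^{−1} lies in the valuation ring O_v. -/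
open Matrix

/-- Let `K` be a field with a valuation subring `O_v` and let `g ∈ GL_{d+n}(K)`. Then
there is a permutation matrix `σ` such that, writing `σg` in blocks `[[α, γ],[β, δ]]`
with `α` of size `d × d`, the block `α` is invertible and all the entries of `β α⁻¹`
lie in the valuation ring `O_v`. -/
theorem exists_perm_row_reduction
    (K : Type*) [Field K] (Ov : ValuationSubring K) (d n : ℕ) (hd : 1 ≤ d) (hn : 1 ≤ n)
    (g : Matrix (Fin d ⊕ Fin n) (Fin d ⊕ Fin n) K) (hg : IsUnit g) :
    ∃ σ : Equiv.Perm (Fin d ⊕ Fin n),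
      IsUnit ((σ.permMatrix K * g).toBlocks₁₁).det ∧
      ∀ (i : Fin n) (j : Fin d),
        ((σ.permMatrix K * g).toBlocks₂₁ * ((σ.permMatrix K * g).toBlocks₁₁)⁻¹) i j ∈ Ov := by
  classical
  set v := Ov.valuation with hv
  let A : Equiv.Perm (Fin d ⊕ Fin n) → Matrix (Fin d) (Fin d) K :=
    fun σ => of fun i j => g (σ (Sum.inl i)) (Sum.inl j)
  have hA : ∀ σ : Equiv.Perm (Fin d ⊕ Fin n), (σ.permMatrix K * g).toBlocks₁₁ = A σ := by
    intro σ
    ext i j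
    rw [Equiv.Perm.permMatrix, PEquiv.toMatrix_toPEquiv_mul]
    rfl
  have hB : ∀ (σ : Equiv.Perm (Fin d ⊕ Fin n)) (i : Fin n) (j : Fin d),
      (σ.permMatrix K * g).toBlocks₂₁ i j = g (σ (Sum.inr i)) (Sum.inl j) := by
    intro σ i j
    rw [Equiv.Perm.permMatrix, PEquiv.toMatrix_toPEquiv_mul]
    rfl
  -- Step 1: there is some permutation whose top-left block is invertible
  have step1 : ∃ σ₀ : Equiv.Perm (Fin d ⊕ Fin n), (A σ₀).det ≠ 0 := by
    set C : Matrix (Fin d ⊕ Fin n) (Fin d) K := g.submatrix id Sum.inl with hC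
    have hspan : Submodule.span K (Set.range C) = ⊤ := by
      rw [eq_top_iff]
      rintro y -
      have hsurj : Function.Surjective g.vecMul :=
        (Matrix.vecMul_surjective_iff_isUnit).2 hg
      obtain ⟨z, hz⟩ := hsurj (Sum.elim y 0)
      rw [show Set.range C = Set.range C.row from rfl, ← range_vecMulLinear]
      refine ⟨z, ?_⟩
      ext j
      have := congrFun hz (Sum.inl j)
      simpa [hC, Matrix.vecMul, dotProduct, Matrix.submatrix] using this
    obtain ⟨t, hts, htop, hli⟩ := exists_linearIndependent K (Set.range C)
    rw [hspan] at htop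
    have htfin : t.Finite := hli.setFinite
    haveI : Fintype t := htfin.fintype
    let bas : Module.Basis t K (Fin d → K) :=
      Module.Basis.mk hli (by rw [Subtype.range_coe, htop])
    have hcard : Fintype.card t = d := by
      have h1 := Module.finrank_eq_card_basis bas
      simp only [Module.finrank_pi, Fintype.card_fin] at h1
      omega
    let e : Fin d ≃ t := (Fintype.equivFinOfCardEq hcard).symm
    have hmem : ∀ k : Fin d, ∃ i : Fin d ⊕ Fin n, C i = (e k : Fin d → K) :=
      fun k => hts (e k).2
    choose r hr using hmem
    have hinj : Function.Injective r := by
      intro k k' hkk'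
      have : (e k : Fin d → K) = (e k' : Fin d → K) := by rw [← hr, ← hr, hkk']
      exact e.injective (Subtype.ext this)
    have hcardc : Fintype.card (Fin n) = Fintype.card ((Set.range r)ᶜ : Set (Fin d ⊕ Fin n)) := by
      rw [Fintype.card_compl_set, Set.card_range_of_injective hinj]
      simp
    let cE : Fin n ≃ ((Set.range r)ᶜ : Set (Fin d ⊕ Fin n)) := Fintype.equivOfCardEq hcardc
    let σ₀ : Equiv.Perm (Fin d ⊕ Fin n) :=
      (Equiv.sumCongr (Equiv.ofInjective r hinj) cE).trans (Equiv.Set.sumCompl (Set.range r))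
    have hσ₀l : ∀ k : Fin d, σ₀ (Sum.inl k) = r k := by
      intro k
      simp [σ₀, Equiv.Set.sumCompl_apply_inl]
    refine ⟨σ₀, ?_⟩
    have hrows : (fun k => A σ₀ k) = (fun k => ((e k : Fin d → K))) := by
      funext k
      have : A σ₀ k = C (r k) := by
        funext l
        simp [A, hσ₀l k, hC]
      rw [this, hr]
    have hliAr : LinearIndependent K (fun k => A σ₀ k) := by
      rw [hrows]
      exact hli.comp e e.injective
    have := Matrix.linearIndependent_rows_iff_isUnit.1 hliAr
    exact ((Matrix.isUnit_iff_isUnit_det _).1 this).ne_zero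
  obtain ⟨σ₀, hσ₀⟩ := step1
  obtain ⟨σ, -, hmax⟩ := Finset.exists_max_image Finset.univ
    (fun τ : Equiv.Perm (Fin d ⊕ Fin n) => v ((A τ).det)) ⟨σ₀, Finset.mem_univ _⟩
  have hvσ : v ((A σ).det) ≠ 0 := by
    intro h0
    have h1 := hmax σ₀ (Finset.mem_univ _)
    rw [h0] at h1
    have : v ((A σ₀).det) = 0 := le_antisymm h1 zero_le'
    exact hσ₀ ((Valuation.zero_iff v).1 this)
  have hdet : (A σ).det ≠ 0 := fun h => hvσ (by rw [h, map_zero])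
  -- key Cramer-type identity
  have key : ∀ (M : Matrix (Fin d) (Fin d) K) (b : Fin d → K) (j : Fin d),
      ∑ k, b k * M.adjugate k j = (M.updateRow j b).det := by
    intro M b j
    have h1 : ∑ k, b k * M.adjugate k j = (b ᵥ* M.adjugate) j := by
      simp [Matrix.vecMul, dotProduct]
    rw [h1, ← Matrix.transpose_transpose M.adjugate, Matrix.vecMul_transpose,
      Matrix.adjugate_transpose, ← Matrix.cramer_eq_adjugate_mulVec,
      Matrix.cramer_transpose_apply]
  refine ⟨σ, ?_, ?_⟩
  · rw [hA]
    exact isUnit_iff_ne_zero.2 hdet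
  · intro i j
    have hentry : ((σ.permMatrix K * g).toBlocks₂₁ * ((σ.permMatrix K * g).toBlocks₁₁)⁻¹) i j
        = ((A σ).det)⁻¹ *
          ((A σ).updateRow j (fun l => g (σ (Sum.inr i)) (Sum.inl l))).det := by
      rw [hA, Matrix.inv_def, Ring.inverse_eq_inv', Matrix.mul_smul, Matrix.smul_apply,
        smul_eq_mul, Matrix.mul_apply]
      congr 1
      rw [← key]
      refine Finset.sum_congr rfl fun k _ => ?_
      rw [hB]
    have hup : (A σ).updateRow j (fun l => g (σ (Sum.inr i)) (Sum.inl l))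
        = A (σ * Equiv.swap (Sum.inl j) (Sum.inr i)) := by
      ext k l
      by_cases hk : k = j
      · subst hk
        simp [A, Equiv.Perm.mul_apply, Equiv.swap_apply_left]
      · rw [Matrix.updateRow_ne hk]
        have h1 : (Sum.inl k : Fin d ⊕ Fin n) ≠ Sum.inl j := by
          simp [hk]
        have h2 : (Sum.inl k : Fin d ⊕ Fin n) ≠ Sum.inr i := by simp
        simp [A, Equiv.Perm.mul_apply, Equiv.swap_apply_of_ne_of_ne h1 h2]
    rw [hentry, hup, ← Ov.valuation_le_one_iff, ← hv, _root_.map_mul, map_inv₀]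
    calc (v ((A σ).det))⁻¹ * v ((A (σ * Equiv.swap (Sum.inl j) (Sum.inr i))).det)
        ≤ (v ((A σ).det))⁻¹ * v ((A σ).det) :=
          mul_le_mul_right (hmax _ (Finset.mem_univ _)) _
      _ = 1 := inv_mul_cancel₀ hvσ
end
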